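/- arXiv:0802.3640 — 4 statements merged into one kernel-verified Lean document; each statement's English description precedes it below -/
import Mathlib

section
/- Let f ∈ G_s(Z) and γ > 4. Then for every (x,x*) ∈ X × X* and every α > 0 there exists (x_α, x_α*) ∈ M_f such that ‖x_α − x‖² + α² ‖x_α* − x*‖² ≤ γ α ( f(x,x*) − ⟨x,x*⟩ ) (trivially, any element of M_f works when f(x,x*) = +∞). -/
open NormedSpace

noncomputable section

/-- The coupling `c(x, x*) := ⟨x, x*⟩` on `Z := X × X*`. -/
def coup (X : Type*) [NormedAddCommGroup X] [NormedSpace ℝ X]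
    (z : X × StrongDual ℝ X) : ℝ := z.2 z.1

/-- The coupling `c(u*, u**) := ⟨u*, u**⟩` on `Z* := X* × X**`. -/
def coupS (X : Type*) [NormedAddCommGroup X] [NormedSpace ℝ X]
    (p : StrongDual ℝ X × StrongDual ℝ (StrongDual ℝ X)) : ℝ := p.2 p.1

/-- The Fenchel conjugate `f* : X* × X** → ℝ ∪ {±∞}` of `f : Z → ℝ ∪ {+∞}`. -/
def conjF (X : Type*) [NormedAddCommGroup X] [NormedSpace ℝ X]
    (f : X × StrongDual ℝ X → EReal) (p : StrongDual ℝ X × StrongDual ℝ (StrongDual ℝ X)) : EReal :=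
  ⨆ z : X × StrongDual ℝ X, (((p.1 z.1 + p.2 z.2 : ℝ) : EReal) - f z)

/-- `M_f := {z | f z = c z}`. -/
def Mset (X : Type*) [NormedAddCommGroup X] [NormedSpace ℝ X]
    (f : X × StrongDual ℝ X → EReal) : Set (X × StrongDual ℝ X) :=
  {z | f z = ((coup X z : ℝ) : EReal)}

namespace Stmt7Aux

/-! ### EReal helpers -/

lemma er_sub_coe_ne_bot {a : EReal} (ha : a ≠ ⊥) (r : ℝ) : a - (r : EReal) ≠ ⊥ := by
  induction a using EReal.rec with
  | bot => exact absurd rfl ha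
  | coe x => rw [← EReal.coe_sub]; exact EReal.coe_ne_bot _
  | top => rw [EReal.top_sub_coe]; exact (by simp)

lemma er_sub_coe_ne_top {a : EReal} (ha : a ≠ ⊤) (r : ℝ) : a - (r : EReal) ≠ ⊤ := by
  induction a using EReal.rec with
  | bot => simp
  | coe x => rw [← EReal.coe_sub]; exact EReal.coe_ne_top _
  | top => exact absurd rfl ha

lemma er_sub_coe_sub_coe (a : EReal) (r t : ℝ) :
    a - (r : EReal) - (t : EReal) = a - ((r + t : ℝ) : EReal) := by
  induction a using EReal.rec with
  | bot => simp
  | coe x => push_cast; norm_cast; ring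
  | top => rw [EReal.top_sub_coe, EReal.top_sub_coe, EReal.top_sub_coe]

lemma er_coe_sub_sub {a : EReal} (ha : a ≠ ⊥) (x y : ℝ) :
    (x : EReal) - (a - (y : EReal)) = ((x + y : ℝ) : EReal) - a := by
  induction a using EReal.rec with
  | bot => exact absurd rfl ha
  | coe z => push_cast; norm_cast; ring
  | top => rw [EReal.top_sub_coe]
           have h1 : (x : EReal) - ⊤ = ⊥ := by
             rw [sub_eq_add_neg, EReal.neg_top, EReal.add_bot]
           have h2 : ((x + y : ℝ) : EReal) - ⊤ = ⊥ := by
             rw [sub_eq_add_neg, EReal.neg_top, EReal.add_bot]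
           rw [h1, h2]

lemma er_sub_coe_le_coe_iff (a : EReal) (r t : ℝ) :
    a - (r : EReal) ≤ (t : EReal) ↔ a ≤ ((t + r : ℝ) : EReal) := by
  induction a using EReal.rec with
  | bot => simp
  | coe x =>
      norm_cast; constructor <;> intro h <;> linarith
  | top =>
      rw [EReal.top_sub_coe]
      simp only [top_le_iff]
      exact ⟨fun h => absurd h (EReal.coe_ne_top _), fun h => absurd h (EReal.coe_ne_top _)⟩

lemma er_coe_le_sub_coe_iff (a : EReal) (r t : ℝ) :
    (t : EReal) ≤ a - (r : EReal) ↔ ((t + r : ℝ) : EReal) ≤ a := by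
  induction a using EReal.rec with
  | bot => simp [sub_eq_add_neg, EReal.bot_add]
  | coe x =>
      norm_cast; constructor <;> intro h <;> linarith
  | top => rw [EReal.top_sub_coe]; simp

lemma er_coe_le_add_coe_iff (a : EReal) (r t : ℝ) :
    (t : EReal) ≤ a + (r : EReal) ↔ ((t - r : ℝ) : EReal) ≤ a := by
  induction a using EReal.rec with
  | bot =>
      rw [EReal.bot_add]
      simp only [le_bot_iff]
      exact ⟨fun h => absurd h (EReal.coe_ne_bot _), fun h => absurd h (EReal.coe_ne_bot _)⟩
  | coe x => norm_cast; constructor <;> intro h <;> linarith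
  | top => rw [EReal.top_add_coe]; simp

lemma er_eq_coe_of_ne {a : EReal} (hb : a ≠ ⊥) (ht : a ≠ ⊤) : a = ((a.toReal : ℝ) : EReal) := by
  induction a using EReal.rec with
  | bot => exact absurd rfl hb
  | coe x => simp
  | top => exact absurd rfl ht


/-! ### Real helpers -/

lemma minkowski2 {a b c d : ℝ} (ha : 0 ≤ a) (hb : 0 ≤ b) (hc : 0 ≤ c) (hd : 0 ≤ d) :
    Real.sqrt ((a + c) ^ 2 + (b + d) ^ 2) ≤ Real.sqrt (a ^ 2 + b ^ 2) + Real.sqrt (c ^ 2 + d ^ 2) := by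
  set s := Real.sqrt (a ^ 2 + b ^ 2) with hs
  set t := Real.sqrt (c ^ 2 + d ^ 2) with ht
  have hs0 : 0 ≤ s := Real.sqrt_nonneg _
  have ht0 : 0 ≤ t := Real.sqrt_nonneg _
  have hs2 : s ^ 2 = a ^ 2 + b ^ 2 := Real.sq_sqrt (by positivity)
  have ht2 : t ^ 2 = c ^ 2 + d ^ 2 := Real.sq_sqrt (by positivity)
  have key : a * c + b * d ≤ s * t := by
    nlinarith [sq_nonneg (a * d - b * c), sq_nonneg (s * t - (a * c + b * d)),
      mul_nonneg hs0 ht0, mul_nonneg (mul_nonneg ha hc) (mul_nonneg hb hd)]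
  have h1 : (a + c) ^ 2 + (b + d) ^ 2 ≤ (s + t) ^ 2 := by nlinarith
  calc Real.sqrt ((a + c) ^ 2 + (b + d) ^ 2) ≤ Real.sqrt ((s + t) ^ 2) :=
        Real.sqrt_le_sqrt h1
    _ = s + t := Real.sqrt_sq (by positivity)

/-- Approximate maximization of `u x - a‖x‖²`. -/
lemma sup_quad {E : Type*} [NormedAddCommGroup E] [NormedSpace ℝ E]
    (u : E →L[ℝ] ℝ) {a η : ℝ} (ha : 0 < a) (hη : 0 < η) :
    ∃ x : E, ‖u‖ ^ 2 / (4 * a) - η ≤ u x - a * ‖x‖ ^ 2 := by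
  by_cases hcase : ‖u‖ ^ 2 ≤ 4 * a * η
  · refine ⟨0, ?_⟩
    simp only [map_zero, norm_zero]
    have : ‖u‖ ^ 2 / (4 * a) ≤ η := by rw [div_le_iff₀ (by positivity)]; nlinarith
    nlinarith
  · push_neg at hcase
    set c := Real.sqrt (‖u‖ ^ 2 - 4 * a * η) with hc
    have hc0 : 0 ≤ c := Real.sqrt_nonneg _
    have hc2 : c ^ 2 = ‖u‖ ^ 2 - 4 * a * η := Real.sq_sqrt (by linarith)
    have hclt : c < ‖u‖ := by
      have h1 : c ^ 2 < ‖u‖ ^ 2 := by nlinarith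
      have h2 : (0:ℝ) ≤ ‖u‖ := norm_nonneg _
      nlinarith
    obtain ⟨x₀, hx₀, hux₀⟩ := u.exists_lt_apply_of_lt_opNorm hclt
    have hsign : ∃ x₁ : E, ‖x₁‖ ≤ 1 ∧ c < u x₁ := by
      rcases le_or_gt 0 (u x₀) with h | h
      · exact ⟨x₀, hx₀.le, by rwa [Real.norm_eq_abs, abs_of_nonneg h] at hux₀⟩
      · refine ⟨-x₀, by simpa using hx₀.le, ?_⟩
        rw [map_neg]
        rwa [Real.norm_eq_abs, abs_of_neg h] at hux₀
    obtain ⟨x₁, hx₁, hux₁⟩ := hsign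
    refine ⟨(c / (2 * a)) • x₁, ?_⟩
    have hca : 0 ≤ c / (2 * a) := by positivity
    have h1 : u ((c / (2 * a)) • x₁) = (c / (2 * a)) * u x₁ := by
      simp [map_smul, smul_eq_mul]
    have h2 : ‖(c / (2 * a)) • x₁‖ ^ 2 ≤ (c / (2 * a)) ^ 2 := by
      rw [norm_smul, Real.norm_eq_abs, abs_of_nonneg hca, mul_pow]
      have h4 : ‖x₁‖ ^ 2 ≤ 1 := by nlinarith [norm_nonneg x₁]
      nlinarith [sq_nonneg (c / (2 * a))]
    have h3 : (c / (2 * a)) * u x₁ ≥ (c / (2 * a)) * c := by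
      exact mul_le_mul_of_nonneg_left hux₁.le hca
    rw [h1]
    have expand : c / (2 * a) * c - a * (c / (2 * a)) ^ 2 = c ^ 2 / (4 * a) := by
      field_simp; ring
    have : c ^ 2 / (4 * a) = ‖u‖ ^ 2 / (4 * a) - η := by
      rw [hc2]; field_simp
    nlinarith [mul_le_mul_of_nonneg_left h2 ha.le]


/-! ### The quadratic penalty -/

section Penalty
variable {X : Type*} [NormedAddCommGroup X] [NormedSpace ℝ X]

def jq (β : ℝ) (z : X × StrongDual ℝ X) : ℝ :=
  1 / (2 * β) * ‖z.1‖ ^ 2 + β / 2 * ‖z.2‖ ^ 2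

lemma jq_nonneg {β : ℝ} (hβ : 0 < β) (z : X × StrongDual ℝ X) : 0 ≤ jq β z := by
  unfold jq; positivity

lemma jq_zero (β : ℝ) : jq β ((0 : X), (0 : StrongDual ℝ X)) = 0 := by simp [jq]

lemma jq_continuous (β : ℝ) : Continuous (jq (X := X) β) := by
  unfold jq
  exact (continuous_const.mul (continuous_fst.norm.pow 2)).add
    (continuous_const.mul (continuous_snd.norm.pow 2))

lemma jq_combo {β : ℝ} (hβ : 0 < β) {a b : ℝ} (ha : 0 ≤ a) (hb : 0 ≤ b) (hab : a + b = 1)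
    (z z' : X × StrongDual ℝ X) :
    jq β (a • z + b • z') ≤ a * jq β z + b * jq β z' := by
  have h1 : ‖(a • z + b • z').1‖ ≤ a * ‖z.1‖ + b * ‖z'.1‖ := by
    calc ‖a • z.1 + b • z'.1‖ ≤ ‖a • z.1‖ + ‖b • z'.1‖ := norm_add_le _ _
      _ = a * ‖z.1‖ + b * ‖z'.1‖ := by
          rw [norm_smul, norm_smul, Real.norm_eq_abs, Real.norm_eq_abs,
            abs_of_nonneg ha, abs_of_nonneg hb]
  have h2 : ‖(a • z + b • z').2‖ ≤ a * ‖z.2‖ + b * ‖z'.2‖ := by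
    calc ‖a • z.2 + b • z'.2‖ ≤ ‖a • z.2‖ + ‖b • z'.2‖ := norm_add_le _ _
      _ = a * ‖z.2‖ + b * ‖z'.2‖ := by
          rw [norm_smul, norm_smul, Real.norm_eq_abs, Real.norm_eq_abs,
            abs_of_nonneg ha, abs_of_nonneg hb]
  have k1 : ‖(a • z + b • z').1‖ ^ 2 ≤ a * ‖z.1‖ ^ 2 + b * ‖z'.1‖ ^ 2 := by
    nlinarith [sq_nonneg (‖z.1‖ - ‖z'.1‖), mul_nonneg ha hb, norm_nonneg (a • z + b • z').1,
      norm_nonneg z.1, norm_nonneg z'.1]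
  have k2 : ‖(a • z + b • z').2‖ ^ 2 ≤ a * ‖z.2‖ ^ 2 + b * ‖z'.2‖ ^ 2 := by
    nlinarith [sq_nonneg (‖z.2‖ - ‖z'.2‖), mul_nonneg ha hb, norm_nonneg (a • z + b • z').2,
      norm_nonneg z.2, norm_nonneg z'.2]
  have c1 : (0:ℝ) < 1 / (2 * β) := by positivity
  have c2 : (0:ℝ) < β / 2 := by positivity
  unfold jq
  nlinarith [mul_le_mul_of_nonneg_left k1 c1.le, mul_le_mul_of_nonneg_left k2 c2.le]

end Penalty

/-! ### The key duality lemma -/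

section Duality
variable {X : Type*} [NormedAddCommGroup X] [NormedSpace ℝ X]

set_option maxHeartbeats 1000000 in
theorem dual_inf (f : X × StrongDual ℝ X → EReal) (hbot : ∀ z, f z ≠ ⊥) (hprop : ∃ z, f z ≠ ⊤)
    (hconv : Convex ℝ {p : (X × StrongDual ℝ X) × ℝ | f p.1 ≤ (p.2 : EReal)})
    (hgeS : ∀ p, ((coupS X p : ℝ) : EReal) ≤ conjF X f p)
    {β δ : ℝ} (hβ : 0 < β) (hδ : 0 < δ) :
    ∃ w : X × StrongDual ℝ X, f w + ((jq β w : ℝ) : EReal) < (δ : EReal) := by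
  by_contra hcon
  push_neg at hcon
  -- the two convex sets
  set A : Set ((X × StrongDual ℝ X) × ℝ) := {p | p.2 + jq β p.1 < δ} with hA
  set B : Set ((X × StrongDual ℝ X) × ℝ) := {p | f p.1 ≤ (p.2 : EReal)} with hB
  have hAconv : Convex ℝ A := by
    intro p hp q hq a b ha hb hab
    simp only [hA, Set.mem_setOf_eq] at hp hq ⊢
    have hcombo := jq_combo hβ ha hb hab p.1 q.1
    have h2 : (a • p + b • q).2 = a * p.2 + b * q.2 := rfl
    have h1 : (a • p + b • q).1 = a • p.1 + b • q.1 := rfl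
    rw [h1, h2] at *
    rcases eq_or_lt_of_le ha with rfl | ha'
    · simp only [zero_add] at hab; subst hab; simpa using hq
    · have e1 : a * (p.2 + jq β p.1) < a * δ := by
        exact (mul_lt_mul_iff_right₀ ha').mpr hp
      have e2 : b * (q.2 + jq β q.1) ≤ b * δ := mul_le_mul_of_nonneg_left hq.le hb
      nlinarith
  have hAopen : IsOpen A := by
    have : A = (fun p : (X × StrongDual ℝ X) × ℝ => p.2 + jq β p.1) ⁻¹' Set.Iio δ := rfl
    rw [this]
    exact (continuous_snd.add ((jq_continuous β).comp continuous_fst)).isOpen_preimage _ isOpen_Iio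
  have hdisj : Disjoint A B := by
    rw [Set.disjoint_left]
    intro p hp hq
    simp only [hA, hB, Set.mem_setOf_eq] at hp hq
    have h1 : f p.1 + ((jq β p.1 : ℝ) : EReal) ≤ ((p.2 + jq β p.1 : ℝ) : EReal) := by
      rw [EReal.coe_add]
      exact add_le_add_left hq _
    have h2 : ((p.2 + jq β p.1 : ℝ) : EReal) < (δ : EReal) := EReal.coe_lt_coe_iff.mpr hp
    exact absurd (lt_of_le_of_lt h1 h2) (not_lt.mpr (hcon p.1))
  obtain ⟨φ, u, hsepA, hsepB⟩ := geometric_hahn_banach_open hAconv hAopen hconv hdisj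
  set ψ : (X × StrongDual ℝ X) →L[ℝ] ℝ := φ.comp (ContinuousLinearMap.inl ℝ (X × StrongDual ℝ X) ℝ) with hψ
  set s : ℝ := φ (0, 1) with hs
  have hφ : ∀ (z : X × StrongDual ℝ X) (t : ℝ), φ (z, t) = ψ z + t * s := by
    intro z t
    have h1 : ((z, t) : (X × StrongDual ℝ X) × ℝ) = (z, 0) + t • ((0 : X × StrongDual ℝ X), (1:ℝ)) := by
      rw [Prod.smul_mk, smul_zero, smul_eq_mul, mul_one, Prod.mk_add_mk, add_zero, zero_add]
    rw [h1, map_add, map_smul, smul_eq_mul]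
    rfl
  have hA_lt : ∀ (z : X × StrongDual ℝ X) (t : ℝ), t + jq β z < δ → ψ z + t * s < u := by
    intro z t ht
    have := hsepA (z, t) ht
    rwa [hφ] at this
  have hB_ge : ∀ (z : X × StrongDual ℝ X) (t : ℝ), f z ≤ (t : EReal) → u ≤ ψ z + t * s := by
    intro z t ht
    have := hsepB (z, t) ht
    rwa [hφ] at this
  obtain ⟨z₁, hz₁⟩ := hprop
  have hz₁eq : f z₁ = (((f z₁).toReal : ℝ) : EReal) := er_eq_coe_of_ne (hbot z₁) hz₁
  -- s ≥ 0
  have hs0 : 0 ≤ s := by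
    by_contra hneg
    push_neg at hneg
    have h0 : ∀ t : ℝ, t < δ → t * s < u := by
      intro t ht
      have := hA_lt ((0:X), (0:StrongDual ℝ X)) t (by rw [jq_zero]; simpa using ht)
      rw [Prod.mk_zero_zero, map_zero, zero_add] at this; exact this
    have h1 : min (δ - 1) (u / s) < δ := lt_of_le_of_lt (min_le_left _ _) (by linarith)
    have h2 := h0 _ h1
    have h3 : min (δ - 1) (u / s) ≤ u / s := min_le_right _ _
    have h4 : u / s * s ≤ min (δ - 1) (u / s) * s := by
      exact mul_le_mul_of_nonpos_right h3 hneg.le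
    rw [div_mul_cancel₀ u (ne_of_lt hneg)] at h4
    linarith
  -- s ≠ 0
  have hspos : 0 < s := by
    rcases eq_or_lt_of_le hs0 with hzero | hpos
    · exfalso
      have hψlt : ∀ z : X × StrongDual ℝ X, ψ z < u := by
        intro z
        have := hA_lt z (δ - jq β z - 1) (by linarith)
        rw [← hzero] at this
        simpa using this
      have hψ0 : ∀ z : X × StrongDual ℝ X, ψ z = 0 := by
        have hle : ∀ z : X × StrongDual ℝ X, ψ z ≤ 0 := by
          intro z
          by_contra hpos'
          push_neg at hpos'
          have := hψlt (((|u| + 1) / ψ z) • z)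
          rw [map_smul, smul_eq_mul, div_mul_cancel₀ _ (ne_of_gt hpos')] at this
          have : u < |u| + 1 := lt_of_le_of_lt (le_abs_self u) (by linarith)
          linarith [hψlt (((|u| + 1) / ψ z) • z),
            (div_mul_cancel₀ (|u| + 1) (ne_of_gt hpos') : (|u| + 1) / ψ z * ψ z = |u| + 1)]
        intro z
        have h1 := hle z
        have h2 := hle (-z)
        rw [map_neg] at h2
        linarith
      have hu_pos : 0 < u := by
        have := hψlt ((0:X), (0:StrongDual ℝ X))
        rwa [hψ0] at this
      have hu_le : u ≤ 0 := by
        have := hB_ge z₁ ((f z₁).toReal) (le_of_eq hz₁eq)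
        rw [hψ0, ← hzero] at this
        simpa using this
      linarith
    · exact hpos
  -- the dual point
  set q₁ : StrongDual ℝ X := -(s⁻¹) • (ψ.comp (ContinuousLinearMap.inl ℝ X (StrongDual ℝ X))) with hq₁
  set q₂ : StrongDual ℝ (StrongDual ℝ X) := -(s⁻¹) • (ψ.comp (ContinuousLinearMap.inr ℝ X (StrongDual ℝ X))) with hq₂
  have hqsum : ∀ z : X × StrongDual ℝ X, q₁ z.1 + q₂ z.2 = -(ψ z) / s := by
    intro z
    have hz : ((z.1, (0 : StrongDual ℝ X)) : X × StrongDual ℝ X) + ((0 : X), z.2) = z := by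
      rw [Prod.mk_add_mk, add_zero, zero_add]
    have : ψ (z.1, (0 : StrongDual ℝ X)) + ψ ((0 : X), z.2) = ψ z := by
      rw [← map_add, hz]
    simp only [hq₁, hq₂, ContinuousLinearMap.smul_apply, ContinuousLinearMap.comp_apply,
      ContinuousLinearMap.inl_apply, ContinuousLinearMap.inr_apply, smul_eq_mul]
    rw [← this]
    field_simp
    ring
  -- bound on the conjugate
  have hconj : conjF X f (q₁, q₂) ≤ ((-u / s : ℝ) : EReal) := by
    rw [conjF]
    apply iSup_le
    intro v
    by_cases hv : f v = ⊤
    · rw [hv]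
      have : ((q₁ v.1 + q₂ v.2 : ℝ) : EReal) - ⊤ = ⊥ := by
        rw [sub_eq_add_neg, EReal.neg_top, EReal.add_bot]
      rw [this]
      exact bot_le
    · have hveq : f v = (((f v).toReal : ℝ) : EReal) := er_eq_coe_of_ne (hbot v) hv
      have h1 : u ≤ ψ v + (f v).toReal * s := hB_ge v _ (le_of_eq hveq)
      rw [hveq, ← EReal.coe_sub, EReal.coe_le_coe_iff, hqsum v]
      have hT : (u - ψ v) / s ≤ (f v).toReal := by
        rw [div_le_iff₀ hspos]; linarith
      have heq : -(ψ v) / s - (u - ψ v) / s = -u / s := by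
        field_simp
        ring
      linarith
  have hcs : q₂ q₁ ≤ -u / s := by
    have h := le_trans (hgeS (q₁, q₂)) hconj
    have h2 := EReal.coe_le_coe_iff.mp h
    simpa only [coupS] using h2
  -- the A-side bound
  have hstar : ∀ z : X × StrongDual ℝ X, ψ z / s + δ - jq β z ≤ u / s := by
    intro z
    have key : ψ z + (δ - jq β z) * s ≤ u := by
      by_contra hgt
      push_neg at hgt
      set ε := (ψ z + (δ - jq β z) * s - u) / (2 * s) with hε
      have hεpos : 0 < ε := by
        apply div_pos _ (by linarith)
        linarith
      have ht : (δ - jq β z - ε) + jq β z < δ := by linarith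
      have := hA_lt z _ ht
      have hεs : ε * s = (ψ z + (δ - jq β z) * s - u) / 2 := by
        rw [hε]; field_simp
      nlinarith
    have h2 : (ψ z + (δ - jq β z) * s) / s ≤ u / s := by
      rw [div_eq_mul_inv, div_eq_mul_inv]
      exact mul_le_mul_of_nonneg_right key (inv_nonneg.mpr hspos.le)
    have h3 : (ψ z + (δ - jq β z) * s) / s = ψ z / s + δ - jq β z := by
      field_simp
      ring
    linarith
  -- the dual-norm lower bound
  have h6 : β / 2 * ‖q₁‖ ^ 2 + 1 / (2 * β) * ‖q₂‖ ^ 2 ≤ u / s - δ := by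
    have key : ∀ η : ℝ, 0 < η → β / 2 * ‖q₁‖ ^ 2 + 1 / (2 * β) * ‖q₂‖ ^ 2 ≤ u / s - δ + η := by
      intro η hη
      obtain ⟨x, hx⟩ := sup_quad (-q₁) (a := 1 / (2 * β)) (by positivity) (half_pos hη)
      obtain ⟨y, hy⟩ := sup_quad (-q₂) (a := β / 2) (by positivity) (half_pos hη)
      have e1 : ‖(-q₁ : StrongDual ℝ X)‖ ^ 2 / (4 * (1 / (2 * β))) = β / 2 * ‖q₁‖ ^ 2 := by
        rw [norm_neg]; field_simp; ring
      have e2 : ‖(-q₂ : StrongDual ℝ (StrongDual ℝ X))‖ ^ 2 / (4 * (β / 2)) = 1 / (2 * β) * ‖q₂‖ ^ 2 := by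
        rw [show ‖(-q₂ : StrongDual ℝ (StrongDual ℝ X))‖ = ‖q₂‖ from norm_neg q₂]; field_simp; ring
      have hz := hstar (x, y)
      have hq' := hqsum (x, y)
      have hψxy : ψ (x, y) / s = -(q₁ x + q₂ y) := by
        rw [neg_div] at hq'
        simp only at hq'
        linarith
      simp only [ContinuousLinearMap.neg_apply] at hx hy
      rw [e1] at hx
      rw [e2] at hy
      have hjq : jq β ((x, y) : X × StrongDual ℝ X) = 1 / (2 * β) * ‖x‖ ^ 2 + β / 2 * ‖y‖ ^ 2 := rfl
      rw [hjq, hψxy] at hz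
      linarith
    by_contra hlt
    push_neg at hlt
    have := key ((β / 2 * ‖q₁‖ ^ 2 + 1 / (2 * β) * ‖q₂‖ ^ 2 - (u / s - δ)) / 2) (by linarith)
    linarith
  -- final contradiction
  have hopn : -(‖q₂‖ * ‖q₁‖) ≤ q₂ q₁ := by
    have h := q₂.le_opNorm q₁
    rw [Real.norm_eq_abs] at h
    linarith [neg_abs_le (q₂ q₁)]
  have amgm : ‖q₂‖ * ‖q₁‖ ≤ β / 2 * ‖q₁‖ ^ 2 + 1 / (2 * β) * ‖q₂‖ ^ 2 := by
    rw [← sub_nonneg]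
    have heq : β / 2 * ‖q₁‖ ^ 2 + 1 / (2 * β) * ‖q₂‖ ^ 2 - ‖q₂‖ * ‖q₁‖
        = (β * ‖q₁‖ - ‖q₂‖) ^ 2 / (2 * β) := by field_simp; ring
    rw [heq]; positivity
  rw [neg_div] at hcs
  linarith [hcs, hopn, amgm, h6]

end Duality

/-! ### More EReal helpers -/

lemma er_sub_coe_add_cancel (a : EReal) (r : ℝ) : a - (r : EReal) + (r : EReal) = a := by
  induction a using EReal.rec with
  | bot => rw [sub_eq_add_neg, EReal.bot_add, EReal.bot_add]
  | coe x => norm_cast; ring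
  | top => rw [EReal.top_sub_coe, EReal.top_add_coe]

lemma er_sub_coe_comm (a : EReal) (r k : ℝ) :
    ((r : EReal) - a) - (k : EReal) = ((r - k : ℝ) : EReal) - a := by
  induction a using EReal.rec with
  | bot =>
      have h1 : (r : EReal) - ⊥ = ⊤ := by
        rw [sub_eq_add_neg, EReal.neg_bot, EReal.coe_add_top]
      have h2 : ((r - k : ℝ) : EReal) - ⊥ = ⊤ := by
        rw [sub_eq_add_neg, EReal.neg_bot, EReal.coe_add_top]
      rw [h1, h2, EReal.top_sub_coe]
  | coe x => norm_cast; ring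
  | top =>
      have h1 : (r : EReal) - ⊤ = ⊥ := by
        rw [sub_eq_add_neg, EReal.neg_top, EReal.add_bot]
      have h2 : ((r - k : ℝ) : EReal) - ⊤ = ⊥ := by
        rw [sub_eq_add_neg, EReal.neg_top, EReal.add_bot]
      rw [h1, h2, sub_eq_add_neg, EReal.bot_add]

lemma er_sub_coe_lt_sub_coe {a b : EReal} (h : a < b) (k : ℝ) :
    a - (k : EReal) < b - (k : EReal) := by
  induction a using EReal.rec with
  | bot =>
      have hb : b - (k : EReal) ≠ ⊥ := er_sub_coe_ne_bot (ne_bot_of_gt h) k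
      rw [sub_eq_add_neg, EReal.bot_add]
      exact Ne.bot_lt hb
  | coe x =>
      induction b using EReal.rec with
      | bot => exact absurd h (by simp)
      | coe y => norm_cast at h ⊢; linarith
      | top => rw [EReal.top_sub_coe, ← EReal.coe_sub]; exact EReal.coe_lt_top _
  | top => exact absurd h (by simp)

lemma er_le_of_forall_lt {c : ℝ} {S : EReal} (h : ∀ ρ : ℝ, ρ < c → (ρ : EReal) < S) :
    (c : EReal) ≤ S := by
  by_contra hS
  push_neg at hS
  induction S using EReal.rec with
  | bot => exact absurd (h (c - 1) (by linarith)) (by simp)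
  | coe σ =>
      have hσ : σ < c := by exact_mod_cast hS
      have := h ((σ + c) / 2) (by linarith)
      have h2 : ((σ + c) / 2 : ℝ) < σ := by exact_mod_cast this
      linarith
  | top => exact absurd hS (by simp)

/-! ### The shifted function -/

section Shift
variable {X : Type*} [NormedAddCommGroup X] [NormedSpace ℝ X]

/-- affine shift term -/
def shL (z₀ w : X × StrongDual ℝ X) : ℝ := z₀.2 w.1 + w.2 z₀.1 + coup X z₀

/-- the translated function `f₀` -/
def fsh (f : X × StrongDual ℝ X → EReal) (z₀ w : X × StrongDual ℝ X) : EReal :=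
  f (z₀ + w) - ((shL z₀ w : ℝ) : EReal)

lemma coup_add (z₀ w : X × StrongDual ℝ X) : coup X (z₀ + w) = coup X w + shL z₀ w := by
  show (z₀.2 + w.2) (z₀.1 + w.1) = _
  rw [ContinuousLinearMap.add_apply, map_add, map_add]
  unfold shL coup
  ring

lemma coup_smul_add (z₀ w : X × StrongDual ℝ X) (t : ℝ) :
    coup X (z₀ + t • w) = coup X z₀ + t * (z₀.2 w.1 + w.2 z₀.1) + t ^ 2 * coup X w := by
  show (z₀.2 + t • w.2) (z₀.1 + t • w.1) = _
  rw [ContinuousLinearMap.add_apply, map_add, map_add, map_smul,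
    ContinuousLinearMap.smul_apply, ContinuousLinearMap.smul_apply, map_smul]
  unfold coup
  simp only [smul_eq_mul]
  ring

lemma f_cvx {f : X × StrongDual ℝ X → EReal}
    (hconv : Convex ℝ {p : (X × StrongDual ℝ X) × ℝ | f p.1 ≤ (p.2 : EReal)})
    {a b : ℝ} (ha : 0 ≤ a) (hb : 0 ≤ b) (hab : a + b = 1)
    {z z' : X × StrongDual ℝ X} {r r' : ℝ} (h : f z ≤ (r : EReal)) (h' : f z' ≤ (r' : EReal)) :
    f (a • z + b • z') ≤ ((a * r + b * r' : ℝ) : EReal) := by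
  have h1 : ((z, r) : (X × StrongDual ℝ X) × ℝ) ∈ {p : (X × StrongDual ℝ X) × ℝ | f p.1 ≤ (p.2 : EReal)} := h
  have h2 : ((z', r') : (X × StrongDual ℝ X) × ℝ) ∈ {p : (X × StrongDual ℝ X) × ℝ | f p.1 ≤ (p.2 : EReal)} := h'
  have h3 := hconv h1 h2 ha hb hab
  simp only [Prod.smul_mk, Prod.mk_add_mk, smul_eq_mul, Set.mem_setOf_eq] at h3
  exact h3

section FixF
variable (f : X × StrongDual ℝ X → EReal) (z₀ : X × StrongDual ℝ X)

lemma fsh_ne_bot (hbot : ∀ z, f z ≠ ⊥) (w : X × StrongDual ℝ X) : fsh f z₀ w ≠ ⊥ :=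
  er_sub_coe_ne_bot (hbot _) _

lemma fsh_prop (hz₀ : f z₀ ≠ ⊤) : ∃ w, fsh f z₀ w ≠ ⊤ := by
  refine ⟨0, ?_⟩
  unfold fsh
  rw [add_zero]
  exact er_sub_coe_ne_top hz₀ _

lemma fsh_conv (hconv : Convex ℝ {p : (X × StrongDual ℝ X) × ℝ | f p.1 ≤ (p.2 : EReal)}) :
    Convex ℝ {p : (X × StrongDual ℝ X) × ℝ | fsh f z₀ p.1 ≤ (p.2 : EReal)} := by
  intro p hp q hq a b ha hb hab
  simp only [Set.mem_setOf_eq] at hp hq ⊢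
  unfold fsh at hp hq ⊢
  rw [er_sub_coe_le_coe_iff] at hp hq ⊢
  have key := f_cvx hconv ha hb hab hp hq
  have hz : a • (z₀ + p.1) + b • (z₀ + q.1) = z₀ + (a • p + b • q).1 := by
    have h1 : (a • p + b • q).1 = a • p.1 + b • q.1 := rfl
    rw [h1, smul_add, smul_add]
    rw [show a • z₀ + a • p.1 + (b • z₀ + b • q.1) = (a • z₀ + b • z₀) + (a • p.1 + b • q.1) by
      abel]
    rw [← add_smul, hab, one_smul]
  rw [hz] at key
  have hsh : shL z₀ (a • p + b • q).1 = a * shL z₀ p.1 + b * shL z₀ q.1 := by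
    have h1 : (a • p + b • q).1 = a • p.1 + b • q.1 := rfl
    rw [h1]
    unfold shL
    rw [Prod.fst_add, Prod.snd_add, Prod.smul_fst, Prod.smul_snd, Prod.smul_fst, Prod.smul_snd,
      map_add, map_smul, ContinuousLinearMap.add_apply, ContinuousLinearMap.smul_apply,
      ContinuousLinearMap.smul_apply, map_smul]
    simp only [smul_eq_mul]
    linear_combination (-(coup X z₀)) * hab
  have h2 : (a • p + b • q).2 = a * p.2 + b * q.2 := rfl
  rw [h2, hsh]
  refine le_trans key ?_
  apply le_of_eq
  norm_cast
  ring

lemma fsh_conjge (hbot : ∀ z, f z ≠ ⊥)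
    (hgeS : ∀ p, ((coupS X p : ℝ) : EReal) ≤ conjF X f p) :
    ∀ p, ((coupS X p : ℝ) : EReal) ≤ conjF X (fsh f z₀) p := by
  intro p
  set q : StrongDual ℝ X × StrongDual ℝ (StrongDual ℝ X) :=
    (p.1 + z₀.2, p.2 + inclusionInDoubleDual ℝ X z₀.1) with hq
  set K : ℝ := p.1 z₀.1 + p.2 z₀.2 + coup X z₀ with hK
  have hqK : coupS X q - K = coupS X p := by
    simp only [coupS, hq, hK, coup, ContinuousLinearMap.add_apply, map_add, dual_def]
    ring
  have hterm : ∀ v : X × StrongDual ℝ X,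
      ((q.1 v.1 + q.2 v.2 - K : ℝ) : EReal) - f v ≤ conjF X (fsh f z₀) p := by
    intro v
    have hv : z₀ + (v - z₀) = v := by abel
    have hre : q.1 v.1 + q.2 v.2 - K = p.1 (v - z₀).1 + p.2 (v - z₀).2 + shL z₀ (v - z₀) := by
      simp only [hq, hK, shL, coup, Prod.fst_sub, Prod.snd_sub, map_sub,
        ContinuousLinearMap.add_apply, ContinuousLinearMap.sub_apply, map_add, dual_def]
      ring
    have heq : ((q.1 v.1 + q.2 v.2 - K : ℝ) : EReal) - f v
        = ((p.1 (v - z₀).1 + p.2 (v - z₀).2 : ℝ) : EReal) - fsh f z₀ (v - z₀) := by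
      unfold fsh
      rw [hv, er_coe_sub_sub (hbot v), hre]
    rw [heq]
    exact le_iSup (fun w => ((p.1 w.1 + p.2 w.2 : ℝ) : EReal) - fsh f z₀ w) (v - z₀)
  apply er_le_of_forall_lt
  intro ρ hρ
  have h3 : ((ρ + K : ℝ) : EReal) < ((coupS X q : ℝ) : EReal) := by
    rw [EReal.coe_lt_coe_iff]
    linarith [hqK]
  have h4 := lt_of_lt_of_le h3 (hgeS q)
  rw [conjF] at h4
  obtain ⟨v, hv⟩ := lt_iSup_iff.mp h4
  have h5 := er_sub_coe_lt_sub_coe hv K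
  have hL : ((ρ + K : ℝ) : EReal) - (K : EReal) = (ρ : EReal) := by
    norm_cast
    ring
  rw [hL, er_sub_coe_comm] at h5
  exact lt_of_lt_of_le h5 (hterm v)

lemma fsh_theta (w : X × StrongDual ℝ X) :
    fsh f z₀ w - ((coup X w : ℝ) : EReal) = f (z₀ + w) - ((coup X (z₀ + w) : ℝ) : EReal) := by
  unfold fsh
  rw [er_sub_coe_sub_coe, coup_add]
  congr 1
  norm_cast
  ring

end FixF

end Shift

/-! ### The iteration step -/

section Step
variable {X : Type*} [NormedAddCommGroup X] [NormedSpace ℝ X]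

/-- real-valued gap function -/
def th (f : X × StrongDual ℝ X → EReal) (z : X × StrongDual ℝ X) : ℝ := (f z).toReal - coup X z

set_option maxHeartbeats 1000000 in
theorem step (f : X × StrongDual ℝ X → EReal) (hbot : ∀ z, f z ≠ ⊥)
    (hconv : Convex ℝ {p : (X × StrongDual ℝ X) × ℝ | f p.1 ≤ (p.2 : EReal)})
    (hge : ∀ z, ((coup X z : ℝ) : EReal) ≤ f z)
    (hgeS : ∀ p, ((coupS X p : ℝ) : EReal) ≤ conjF X f p)
    (z₀ : X × StrongDual ℝ X) (hz₀ : f z₀ ≠ ⊤) {α δ : ℝ} (hα : 0 < α) (hδ : 0 < δ) :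
    ∃ z₁ : X × StrongDual ℝ X, f z₁ ≠ ⊤ ∧
      th f z₁ ≤ 1 / 25 * th f z₀ + δ ∧
      ‖z₁.1 - z₀.1‖ ^ 2 + α ^ 2 * ‖z₁.2 - z₀.2‖ ^ 2 ≤ 48 / 25 * α * th f z₀ + δ := by
  set δ₀ : ℝ := min (δ / 2) (25 * δ / (1152 * α)) with hδ₀def
  have hδ₀pos : 0 < δ₀ := lt_min (by linarith) (by positivity)
  have hδ₀a : δ₀ ≤ δ / 2 := min_le_left _ _
  have hδ₀b : 1152 / 25 * α * δ₀ ≤ δ := by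
    have h1 : δ₀ ≤ 25 * δ / (1152 * α) := min_le_right _ _
    have h2 : 1152 / 25 * α * δ₀ ≤ 1152 / 25 * α * (25 * δ / (1152 * α)) :=
      mul_le_mul_of_nonneg_left h1 (by positivity)
    have h3 : 1152 / 25 * α * (25 * δ / (1152 * α)) = δ := by field_simp
    linarith
  obtain ⟨w, hw⟩ := dual_inf (fsh f z₀) (fsh_ne_bot f z₀ hbot) (fsh_prop f z₀ hz₀)
    (fsh_conv f z₀ hconv) (fsh_conjge f z₀ hbot hgeS) hα hδ₀pos
  -- extract real facts
  have hwtop : fsh f z₀ w ≠ ⊤ := by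
    intro h
    rw [h, EReal.top_add_coe] at hw
    exact absurd hw (by simp)
  set ρ : ℝ := (fsh f z₀ w).toReal with hρdef
  have hρeq : fsh f z₀ w = (ρ : EReal) := er_eq_coe_of_ne (fsh_ne_bot f z₀ hbot w) hwtop
  have hjw : ρ + jq α w ≤ δ₀ := by
    rw [hρeq, ← EReal.coe_add] at hw
    exact (EReal.coe_lt_coe_iff.mp hw).le
  have hcw : coup X w ≤ ρ := by
    have h1 : ((coup X w : ℝ) : EReal) ≤ fsh f z₀ w := by
      unfold fsh
      rw [er_coe_le_sub_coe_iff]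
      have h2 := hge (z₀ + w)
      rwa [coup_add] at h2
    rw [hρeq] at h1
    exact EReal.coe_le_coe_iff.mp h1
  have hjw0 : 0 ≤ jq α w := jq_nonneg hα w
  have hcwlow : -(jq α w) ≤ coup X w := by
    have h1 := w.2.le_opNorm w.1
    rw [Real.norm_eq_abs] at h1
    have h2 : ‖w.2‖ * ‖w.1‖ ≤ jq α w := by
      unfold jq
      rw [← sub_nonneg]
      have heq : 1 / (2 * α) * ‖w.1‖ ^ 2 + α / 2 * ‖w.2‖ ^ 2 - ‖w.2‖ * ‖w.1‖
          = (‖w.1‖ - α * ‖w.2‖) ^ 2 / (2 * α) := by field_simp; ring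
      rw [heq]; positivity
    have h3 := neg_abs_le (w.2 w.1)
    have : coup X w = w.2 w.1 := rfl
    linarith
  -- the data at z₀
  set F₀ : ℝ := (f z₀).toReal with hF₀def
  have hf₀eq : f z₀ = (F₀ : EReal) := er_eq_coe_of_ne (hbot z₀) hz₀
  have hε0 : coup X z₀ ≤ F₀ := by
    have := hge z₀
    rw [hf₀eq] at this
    exact EReal.coe_le_coe_iff.mp this
  -- the data at z₀ + w
  set S : ℝ := z₀.2 w.1 + w.2 z₀.1 with hSdef
  have hshw : shL z₀ w = S + coup X z₀ := rfl
  have hf1 : f (z₀ + w) = ((ρ + shL z₀ w : ℝ) : EReal) := by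
    have h1 := er_sub_coe_add_cancel (f (z₀ + w)) (shL z₀ w)
    have h2 : fsh f z₀ w + ((shL z₀ w : ℝ) : EReal) = f (z₀ + w) := h1
    rw [hρeq, ← EReal.coe_add] at h2
    exact h2.symm
  -- the new point
  set z₁ : X × StrongDual ℝ X := z₀ + (24 / 25 : ℝ) • w with hz₁def
  have hzid : (1 / 25 : ℝ) • z₀ + (24 / 25 : ℝ) • (z₀ + w) = z₁ := by
    rw [hz₁def, smul_add]
    rw [show (1 / 25 : ℝ) • z₀ + ((24 / 25 : ℝ) • z₀ + (24 / 25 : ℝ) • w)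
        = ((1 / 25 : ℝ) • z₀ + (24 / 25 : ℝ) • z₀) + (24 / 25 : ℝ) • w by abel]
    rw [← add_smul]
    norm_num
  have hcvx : f z₁ ≤ ((1 / 25 * F₀ + 24 / 25 * (ρ + shL z₀ w) : ℝ) : EReal) := by
    rw [← hzid]
    exact f_cvx hconv (by norm_num) (by norm_num) (by norm_num) (le_of_eq hf₀eq) (le_of_eq hf1)
  have hz₁top : f z₁ ≠ ⊤ := by
    intro h
    rw [h] at hcvx
    exact absurd hcvx (not_le.mpr (EReal.coe_lt_top _))
  have hz₁real : (f z₁).toReal ≤ 1 / 25 * F₀ + 24 / 25 * (ρ + shL z₀ w) := by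
    have := EReal.toReal_le_toReal hcvx (hbot z₁) (EReal.coe_ne_top _)
    rwa [EReal.toReal_coe] at this
  have hcoupz₁ : coup X z₁ = coup X z₀ + 24 / 25 * S + (24 / 25) ^ 2 * coup X w :=
    coup_smul_add z₀ w (24 / 25)
  have hθ₁low : 0 ≤ th f z₁ := by
    unfold th
    have h1 := hge z₁
    rw [er_eq_coe_of_ne (hbot z₁) hz₁top] at h1
    linarith [EReal.coe_le_coe_iff.mp h1]
  have hθ₁ : th f z₁ ≤ 1 / 25 * th f z₀ + 24 / 25 * ρ - 576 / 625 * coup X w := by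
    unfold th
    have e1 := hz₁real
    rw [hshw] at e1
    rw [hcoupz₁, ← hF₀def]
    have e2 : ((24 : ℝ) / 25) ^ 2 = 576 / 625 := by norm_num
    rw [e2]
    linarith
  -- bound on jq
  have hjqbound : 24 / 625 * jq α w ≤ 1 / 25 * th f z₀ + 24 / 25 * δ₀ := by
    nlinarith [hθ₁low, hθ₁, hjw, hcwlow]
  -- distance identity
  have hdist : ‖z₁.1 - z₀.1‖ ^ 2 + α ^ 2 * ‖z₁.2 - z₀.2‖ ^ 2 = (24 / 25) ^ 2 * (2 * α * jq α w) := by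
    have h1 : z₁.1 - z₀.1 = (24 / 25 : ℝ) • w.1 := by
      rw [hz₁def]; show z₀.1 + (24 / 25 : ℝ) • w.1 - z₀.1 = _; abel
    have h2 : z₁.2 - z₀.2 = (24 / 25 : ℝ) • w.2 := by
      rw [hz₁def]; show z₀.2 + (24 / 25 : ℝ) • w.2 - z₀.2 = _; abel
    rw [h1, h2, norm_smul, norm_smul, Real.norm_eq_abs]
    have h3 : |(24 / 25 : ℝ)| = 24 / 25 := by norm_num
    rw [h3]
    unfold jq
    field_simp
  refine ⟨z₁, hz₁top, ?_, ?_⟩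
  · nlinarith [hθ₁, hjw, hjw0, hcw, hcwlow]
  · rw [hdist]
    have hmul := mul_le_mul_of_nonneg_left hjqbound (by positivity : (0:ℝ) ≤ 2 * α * (625 / 24))
    nlinarith [hδ₀b]

end Step

/-! ### Dependent choice -/

lemma dep_choice {Z : Type*} (P : Z → Prop) (Q : ℕ → Z → Z → Prop) (z₀ : Z) (h0 : P z₀)
    (H : ∀ k z, P z → ∃ z', P z' ∧ Q k z z') :
    ∃ u : ℕ → Z, u 0 = z₀ ∧ (∀ k, P (u k)) ∧ ∀ k, Q k (u k) (u (k + 1)) := by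
  let v : ℕ → {z : Z // P z} := fun k => Nat.rec ⟨z₀, h0⟩ (fun k ih =>
    ⟨(H k ih.1 ih.2).choose, (H k ih.1 ih.2).choose_spec.1⟩) k
  refine ⟨fun k => (v k).1, rfl, fun k => (v k).2, fun k => ?_⟩
  exact (H k (v k).1 (v k).2).choose_spec.2

/-! ### The main construction -/

section MainCon
variable {X : Type*} [NormedAddCommGroup X] [NormedSpace ℝ X] [CompleteSpace X]

open Filter Topology

lemma coup_continuous : Continuous (coup X) := by
  have h : Continuous fun q : StrongDual ℝ X × X => q.1 q.2 := isBoundedBilinearMap_apply.continuous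
  have : (coup X) = (fun q : StrongDual ℝ X × X => q.1 q.2) ∘ Prod.swap := rfl
  rw [this]
  exact h.comp continuous_swap

set_option maxHeartbeats 1600000 in
theorem mainCon (f : X × StrongDual ℝ X → EReal) (hbot : ∀ z, f z ≠ ⊥)
    (hconv : Convex ℝ {p : (X × StrongDual ℝ X) × ℝ | f p.1 ≤ (p.2 : EReal)})
    (hge : ∀ z, ((coup X z : ℝ) : EReal) ≤ f z)
    (hgeS : ∀ p, ((coupS X p : ℝ) : EReal) ≤ conjF X f p)
    (hlsc : LowerSemicontinuous f)
    (z₀ : X × StrongDual ℝ X) (hz₀ : f z₀ ≠ ⊤) {α γ : ℝ} (hα : 0 < α) (hγ : 4 < γ) :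
    ∃ w : X × StrongDual ℝ X, f w = ((coup X w : ℝ) : EReal) ∧
      ‖w.1 - z₀.1‖ ^ 2 + α ^ 2 * ‖w.2 - z₀.2‖ ^ 2 ≤ γ * α * th f z₀ := by
  have hth_nonneg : ∀ z : X × StrongDual ℝ X, f z ≠ ⊤ → 0 ≤ th f z := by
    intro z hz
    have h1 := hge z
    rw [er_eq_coe_of_ne (hbot z) hz] at h1
    have := EReal.coe_le_coe_iff.mp h1
    unfold th
    linarith
  set ε₀ : ℝ := th f z₀ with hε₀def
  have hε₀0 : 0 ≤ ε₀ := hth_nonneg z₀ hz₀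
  rcases eq_or_lt_of_le hε₀0 with hε₀z | hε₀pos
  · -- the point itself is in M_f
    refine ⟨z₀, ?_, ?_⟩
    · rw [er_eq_coe_of_ne (hbot z₀) hz₀]
      have : (f z₀).toReal = coup X z₀ := by
        have : th f z₀ = 0 := hε₀z.symm
        unfold th at this
        linarith
      rw [this]
    · simp only [sub_self, norm_zero]
      rw [← hε₀z]
      norm_num
  · -- the iteration
    have h768 : (768 : ℝ) / 225 < 4 := by norm_num
    set σ : ℝ := min ε₀ ((γ - 768 / 225) * α * ε₀ / (768 / 225 * α + 1 / 25)) with hσdef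
    have hσpos : 0 < σ := by
      apply lt_min hε₀pos
      apply div_pos
      · have : 0 < γ - 768 / 225 := by linarith
        positivity
      · positivity
    have hσ1 : σ ≤ ε₀ := min_le_left _ _
    have hσ2 : σ * (768 / 225 * α + 1 / 25) ≤ (γ - 768 / 225) * α * ε₀ := by
      have h1 : σ ≤ (γ - 768 / 225) * α * ε₀ / (768 / 225 * α + 1 / 25) := min_le_right _ _
      have hden : (0:ℝ) < 768 / 225 * α + 1 / 25 := by positivity
      calc σ * (768 / 225 * α + 1 / 25)
          ≤ ((γ - 768 / 225) * α * ε₀ / (768 / 225 * α + 1 / 25)) * (768 / 225 * α + 1 / 25) :=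
            mul_le_mul_of_nonneg_right h1 hden.le
        _ = (γ - 768 / 225) * α * ε₀ := div_mul_cancel₀ _ hden.ne'
    set E : ℝ := ε₀ + σ with hEdef
    have hE0 : 0 < E := by positivity
    -- the sequence
    obtain ⟨u, hu0, huP, huQ⟩ := dep_choice (fun z => f z ≠ ⊤)
      (fun k z z' => th f z' ≤ 1 / 25 * th f z + 9 / 400 * σ * (1 / 16) ^ k ∧
        ‖z'.1 - z.1‖ ^ 2 + α ^ 2 * ‖z'.2 - z.2‖ ^ 2
          ≤ 48 / 25 * α * th f z + 9 / 400 * σ * (1 / 16) ^ k)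
      z₀ hz₀
      (fun k z hz => step f hbot hconv hge hgeS z hz hα
        (by positivity : (0:ℝ) < 9 / 400 * σ * (1 / 16) ^ k))
    -- the invariant
    have hInv : ∀ k, th f (u k) ≤ E * (1 / 16) ^ k := by
      intro k
      induction k with
      | zero => rw [hu0, pow_zero, mul_one]; rw [← hε₀def]; linarith
      | succ k ih =>
          have h1 := (huQ k).1
          have hp : (0:ℝ) < (1 / 16 : ℝ) ^ k := by positivity
          have h2 : ((1:ℝ) / 16) ^ (k + 1) = (1 / 16) ^ k * (1 / 16) := pow_succ _ _
          rw [h2]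
          nlinarith
    set M : ℝ := 48 / 25 * α * E + 9 / 400 * σ with hMdef
    have hM0 : 0 < M := by positivity
    have hD : ∀ k, ‖(u (k+1)).1 - (u k).1‖ ^ 2 + α ^ 2 * ‖(u (k+1)).2 - (u k).2‖ ^ 2
        ≤ M * (1 / 16) ^ k := by
      intro k
      have h1 := (huQ k).2
      have h2 := hInv k
      have hp : (0:ℝ) < (1 / 16 : ℝ) ^ k := by positivity
      nlinarith
    -- step norms
    have hsqrtpow : ∀ k : ℕ, Real.sqrt (M * (1 / 16) ^ k) = Real.sqrt M * (1 / 4) ^ k := by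
      intro k
      rw [show ((1:ℝ) / 16) = (1 / 4) * (1 / 4) by norm_num, mul_pow,
        show ((1:ℝ)/4) ^ k * (1/4) ^ k = ((1/4 : ℝ) ^ k * (1/4) ^ k) by ring]
      rw [Real.sqrt_mul hM0.le, Real.sqrt_mul_self (by positivity)]
    have hNstep : ∀ k, Real.sqrt (‖(u (k+1)).1 - (u k).1‖ ^ 2
        + α ^ 2 * ‖(u (k+1)).2 - (u k).2‖ ^ 2) ≤ Real.sqrt M * (1 / 4) ^ k := by
      intro k
      rw [← hsqrtpow k]
      exact Real.sqrt_le_sqrt (hD k)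
    -- Cauchy
    have hstep1 : ∀ k, ‖(u (k+1)).1 - (u k).1‖ ≤ Real.sqrt M * (1 / 4) ^ k := by
      intro k
      refine le_trans ?_ (hNstep k)
      rw [Real.le_sqrt (norm_nonneg _) (by positivity)]
      nlinarith [sq_nonneg (α * ‖(u (k+1)).2 - (u k).2‖), norm_nonneg ((u (k+1)).2 - (u k).2)]
    have hstep2 : ∀ k, ‖(u (k+1)).2 - (u k).2‖ ≤ (1 / α) * (Real.sqrt M * (1 / 4) ^ k) := by
      intro k
      have h1 : α * ‖(u (k+1)).2 - (u k).2‖ ≤ Real.sqrt M * (1 / 4) ^ k := by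
        refine le_trans ?_ (hNstep k)
        rw [Real.le_sqrt (by positivity) (by positivity)]
        nlinarith [norm_nonneg ((u (k+1)).1 - (u k).1), sq_nonneg (‖(u (k+1)).1 - (u k).1‖)]
      have := mul_le_mul_of_nonneg_left h1 (by positivity : (0:ℝ) ≤ 1 / α)
      calc ‖(u (k+1)).2 - (u k).2‖ = (1 / α) * (α * ‖(u (k+1)).2 - (u k).2‖) := by
            field_simp
        _ ≤ (1 / α) * (Real.sqrt M * (1 / 4) ^ k) := this
    have hsqM : 0 ≤ Real.sqrt M := Real.sqrt_nonneg M
    have hcauchy : CauchySeq u := by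
      apply cauchySeq_of_le_geometric (1 / 4) ((1 + 1 / α) * Real.sqrt M) (by norm_num)
      intro n
      have hpw : (0:ℝ) ≤ (1/4 : ℝ) ^ n := by positivity
      have hia : (0:ℝ) < 1 / α := by positivity
      rw [dist_comm, Prod.dist_eq]
      apply max_le
      · rw [dist_eq_norm]
        refine le_trans (hstep1 n) ?_
        rw [show (1 + 1 / α) * Real.sqrt M * (1 / 4) ^ n
            = Real.sqrt M * (1 / 4) ^ n + 1 / α * (Real.sqrt M * (1 / 4) ^ n) by ring]
        have : (0:ℝ) ≤ 1 / α * (Real.sqrt M * (1 / 4) ^ n) := by positivity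
        linarith
      · rw [dist_eq_norm]
        refine le_trans (hstep2 n) ?_
        rw [show (1 + 1 / α) * Real.sqrt M * (1 / 4) ^ n
            = Real.sqrt M * (1 / 4) ^ n + 1 / α * (Real.sqrt M * (1 / 4) ^ n) by ring]
        have : (0:ℝ) ≤ Real.sqrt M * (1 / 4) ^ n := by positivity
        linarith
    obtain ⟨zb, hzb⟩ := cauchySeq_tendsto_of_complete hcauchy
    -- partial sums bound
    have hpart : ∀ n, Real.sqrt (‖(u n).1 - z₀.1‖ ^ 2 + α ^ 2 * ‖(u n).2 - z₀.2‖ ^ 2)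
        ≤ Real.sqrt M * (4 / 3) * (1 - (1 / 4) ^ n) := by
      intro n
      induction n with
      | zero =>
          rw [hu0]
          simp
      | succ n ih =>
          have t1 : ‖(u (n+1)).1 - z₀.1‖ ≤ ‖(u (n+1)).1 - (u n).1‖ + ‖(u n).1 - z₀.1‖ := by
            have := norm_add_le ((u (n+1)).1 - (u n).1) ((u n).1 - z₀.1)
            rwa [sub_add_sub_cancel] at this
          have t2 : α * ‖(u (n+1)).2 - z₀.2‖
              ≤ α * ‖(u (n+1)).2 - (u n).2‖ + α * ‖(u n).2 - z₀.2‖ := by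
            have := norm_add_le ((u (n+1)).2 - (u n).2) ((u n).2 - z₀.2)
            rw [sub_add_sub_cancel] at this
            nlinarith
          have m1 : Real.sqrt (‖(u (n+1)).1 - z₀.1‖ ^ 2 + α ^ 2 * ‖(u (n+1)).2 - z₀.2‖ ^ 2)
              ≤ Real.sqrt ((‖(u (n+1)).1 - (u n).1‖ + ‖(u n).1 - z₀.1‖) ^ 2
                + (α * ‖(u (n+1)).2 - (u n).2‖ + α * ‖(u n).2 - z₀.2‖) ^ 2) := by
            apply Real.sqrt_le_sqrt
            have e1 : α ^ 2 * ‖(u (n+1)).2 - z₀.2‖ ^ 2 = (α * ‖(u (n+1)).2 - z₀.2‖) ^ 2 := by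
              ring
            rw [e1]
            have b1 : ‖(u (n+1)).1 - z₀.1‖ ^ 2
                ≤ (‖(u (n+1)).1 - (u n).1‖ + ‖(u n).1 - z₀.1‖) ^ 2 :=
              pow_le_pow_left₀ (norm_nonneg _) t1 2
            have b2 : (α * ‖(u (n+1)).2 - z₀.2‖) ^ 2
                ≤ (α * ‖(u (n+1)).2 - (u n).2‖ + α * ‖(u n).2 - z₀.2‖) ^ 2 :=
              pow_le_pow_left₀ (by positivity) t2 2
            linarith
          have m2 := minkowski2 (norm_nonneg ((u (n+1)).1 - (u n).1))
            (by positivity : (0:ℝ) ≤ α * ‖(u (n+1)).2 - (u n).2‖)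
            (norm_nonneg ((u n).1 - z₀.1))
            (by positivity : (0:ℝ) ≤ α * ‖(u n).2 - z₀.2‖)
          have e2 : ‖(u (n+1)).1 - (u n).1‖ ^ 2 + (α * ‖(u (n+1)).2 - (u n).2‖) ^ 2
              = ‖(u (n+1)).1 - (u n).1‖ ^ 2 + α ^ 2 * ‖(u (n+1)).2 - (u n).2‖ ^ 2 := by ring
          have e3 : ‖(u n).1 - z₀.1‖ ^ 2 + (α * ‖(u n).2 - z₀.2‖) ^ 2
              = ‖(u n).1 - z₀.1‖ ^ 2 + α ^ 2 * ‖(u n).2 - z₀.2‖ ^ 2 := by ring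
          rw [e2, e3] at m2
          have hN := hNstep n
          have final : Real.sqrt (‖(u (n+1)).1 - z₀.1‖ ^ 2 + α ^ 2 * ‖(u (n+1)).2 - z₀.2‖ ^ 2)
              ≤ Real.sqrt M * (1 / 4) ^ n
                + Real.sqrt M * (4 / 3) * (1 - (1 / 4) ^ n) := by
            refine le_trans m1 (le_trans m2 ?_)
            exact add_le_add hN ih
          refine le_trans final ?_
          rw [show ((1:ℝ)/4) ^ (n + 1) = (1/4) ^ n * (1/4) by rw [pow_succ]]
          nlinarith [pow_nonneg (by norm_num : (0:ℝ) ≤ 1/4) n]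
    -- pass to the limit in the distance bound
    have hq2 : ∀ n, ‖(u n).1 - z₀.1‖ ^ 2 + α ^ 2 * ‖(u n).2 - z₀.2‖ ^ 2
        ≤ (Real.sqrt M * (4 / 3)) ^ 2 := by
      intro n
      have h1 := hpart n
      have hpw : (0:ℝ) ≤ (1/4 : ℝ) ^ n := by positivity
      have hpw1 : (1/4 : ℝ) ^ n ≤ 1 := pow_le_one₀ (by norm_num) (by norm_num)
      have h2 : Real.sqrt (‖(u n).1 - z₀.1‖ ^ 2 + α ^ 2 * ‖(u n).2 - z₀.2‖ ^ 2)
          ≤ Real.sqrt M * (4 / 3) := by nlinarith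
      have h3 : (0:ℝ) ≤ ‖(u n).1 - z₀.1‖ ^ 2 + α ^ 2 * ‖(u n).2 - z₀.2‖ ^ 2 := by positivity
      have h4 := Real.sq_sqrt h3
      nlinarith [Real.sqrt_nonneg (‖(u n).1 - z₀.1‖ ^ 2 + α ^ 2 * ‖(u n).2 - z₀.2‖ ^ 2)]
    have hlim1 : Tendsto (fun n => ‖(u n).1 - z₀.1‖) atTop (𝓝 ‖zb.1 - z₀.1‖) :=
      (((continuous_fst.tendsto zb).comp hzb).sub_const z₀.1).norm
    have hlim2 : Tendsto (fun n => ‖(u n).2 - z₀.2‖) atTop (𝓝 ‖zb.2 - z₀.2‖) :=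
      (((continuous_snd.tendsto zb).comp hzb).sub_const z₀.2).norm
    have hlimsum : Tendsto (fun n => ‖(u n).1 - z₀.1‖ ^ 2 + α ^ 2 * ‖(u n).2 - z₀.2‖ ^ 2)
        atTop (𝓝 (‖zb.1 - z₀.1‖ ^ 2 + α ^ 2 * ‖zb.2 - z₀.2‖ ^ 2)) :=
      (hlim1.pow 2).add ((hlim2.pow 2).const_mul (α ^ 2))
    have hdistfinal : ‖zb.1 - z₀.1‖ ^ 2 + α ^ 2 * ‖zb.2 - z₀.2‖ ^ 2
        ≤ (Real.sqrt M * (4 / 3)) ^ 2 :=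
      le_of_tendsto hlimsum (Filter.Eventually.of_forall hq2)
    -- membership in M_f
    have hthlim : Tendsto (fun n => th f (u n)) atTop (𝓝 0) := by
      have hup : Tendsto (fun n : ℕ => E * (1 / 16 : ℝ) ^ n) atTop (𝓝 0) := by
        have := tendsto_pow_atTop_nhds_zero_of_lt_one
          (by norm_num : (0:ℝ) ≤ 1 / 16) (by norm_num : (1:ℝ) / 16 < 1)
        simpa using this.const_mul E
      have hlow : Tendsto (fun _ : ℕ => (0:ℝ)) atTop (𝓝 0) := tendsto_const_nhds
      exact tendsto_of_tendsto_of_tendsto_of_le_of_le hlow hup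
        (fun n => hth_nonneg (u n) (huP n)) (fun n => hInv n)
    have hcouplim : Tendsto (fun n => coup X (u n)) atTop (𝓝 (coup X zb)) :=
      (coup_continuous.tendsto zb).comp hzb
    have hmem : f zb = ((coup X zb : ℝ) : EReal) := by
      by_contra hne
      have h1 : ((coup X zb : ℝ) : EReal) < f zb := lt_of_le_of_ne (hge zb) (Ne.symm hne)
      -- find a real number strictly between
      have hy : ∃ y : ℝ, coup X zb < y ∧ ((y : ℝ) : EReal) < f zb := by
        by_cases htop : f zb = ⊤
        · exact ⟨coup X zb + 1, by linarith, by rw [htop]; exact EReal.coe_lt_top _⟩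
        · have heq := er_eq_coe_of_ne (hbot zb) htop
          rw [heq] at h1 ⊢
          have hr := EReal.coe_lt_coe_iff.mp h1
          exact ⟨(coup X zb + (f zb).toReal) / 2, by linarith,
            EReal.coe_lt_coe_iff.mpr (by linarith)⟩
      obtain ⟨y, hy1, hy2⟩ := hy
      have hev1 := hlsc zb _ hy2
      have hev2 : ∀ᶠ n in atTop, (y : EReal) < f (u n) := hzb.eventually hev1
      have hev3 : ∀ᶠ n in atTop, y < coup X (u n) + th f (u n) := by
        filter_upwards [hev2] with n hn
        have heqn : f (u n) = ((coup X (u n) + th f (u n) : ℝ) : EReal) := by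
          rw [er_eq_coe_of_ne (hbot (u n)) (huP n)]
          congr 1
          unfold th
          ring
        rw [heqn] at hn
        exact EReal.coe_lt_coe_iff.mp hn
      have hcl : Tendsto (fun n => coup X (u n) + th f (u n)) atTop (𝓝 (coup X zb + 0)) :=
        hcouplim.add hthlim
      rw [add_zero] at hcl
      have := ge_of_tendsto hcl (hev3.mono fun n hn => hn.le)
      linarith
    refine ⟨zb, hmem, ?_⟩
    -- final arithmetic
    have hsqM2 : (Real.sqrt M * (4 / 3)) ^ 2 = M * (16 / 9) := by
      rw [mul_pow, Real.sq_sqrt hM0.le]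
      norm_num
    rw [hsqM2] at hdistfinal
    have hfin : M * (16 / 9) ≤ γ * α * ε₀ := by
      rw [hMdef, hEdef]
      nlinarith [hσ2, hσ1, hσpos, hα, hε₀pos]
    linarith

end MainCon

end Stmt7Aux

/-- for `f ∈ G_s(Z)` and `γ > 4`, every `(x, x*) ∈ Z` and every `α > 0` admit
`(x_α, x_α*) ∈ M_f` with `‖x_α - x‖² + α²‖x_α* - x*‖² ≤ γ α (f(x,x*) - ⟨x, x*⟩)`
(the right-hand side being `+∞` when `f(x, x*) = +∞`, in `EReal`). -/
theorem stmt7 {X : Type*} [NormedAddCommGroup X] [NormedSpace ℝ X] [CompleteSpace X]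
    (f : X × StrongDual ℝ X → EReal)
    (hne_bot : ∀ z, f z ≠ ⊥) (hproper : ∃ z, f z ≠ ⊤)
    (hconv : Convex ℝ {p : (X × StrongDual ℝ X) × ℝ | f p.1 ≤ (p.2 : EReal)})
    (hge : ∀ z, ((coup X z : ℝ) : EReal) ≤ f z)
    (hgeS : ∀ p, ((coupS X p : ℝ) : EReal) ≤ conjF X f p)
    (hlsc : LowerSemicontinuous f)
    (γ : ℝ) (hγ : 4 < γ) (z : X × StrongDual ℝ X) (α : ℝ) (hα : 0 < α) :
    ∃ w ∈ Mset X f,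
      ((‖w.1 - z.1‖ ^ 2 + α ^ 2 * ‖w.2 - z.2‖ ^ 2 : ℝ) : EReal)
        ≤ ((γ * α : ℝ) : EReal) * (f z - ((coup X z : ℝ) : EReal)) := by
  by_cases htop : f z = ⊤
  · obtain ⟨z₁, hz₁⟩ := hproper
    obtain ⟨w, hw, -⟩ := Stmt7Aux.mainCon f hne_bot hconv hge hgeS hlsc z₁ hz₁
      (α := 1) (γ := 5) one_pos (by norm_num)
    refine ⟨w, hw, ?_⟩
    rw [htop, EReal.top_sub_coe, EReal.coe_mul_top_of_pos (by positivity : (0:ℝ) < γ * α)]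
    exact le_top
  · obtain ⟨w, hw, hb⟩ := Stmt7Aux.mainCon f hne_bot hconv hge hgeS hlsc z htop hα hγ
    refine ⟨w, hw, ?_⟩
    rw [Stmt7Aux.er_eq_coe_of_ne (hne_bot z) htop, ← EReal.coe_sub, ← EReal.coe_mul,
      EReal.coe_le_coe_iff]
    unfold Stmt7Aux.th at hb
    linarith
end
end

section
/- Let f ∈ G_s(Z). Then the norm closure of dom M_f equals the norm closure of Pr_X(dom f), and the norm closure of Im M_f equals the norm closure of Pr_{X*}(dom f). In particular, the norm closures of dom M_f and of Im M_f are convex sets. -/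
set_option maxHeartbeats 2000000


open NormedSpace

noncomputable section

section Aux

variable {X : Type*} [NormedAddCommGroup X] [NormedSpace ℝ X]

lemma opnorm_aux {E : Type*} [NormedAddCommGroup E] [NormedSpace ℝ E]
    (g : E →L[ℝ] ℝ) {s r : ℝ} (hs : 0 < s) (h : ∀ x, ‖x‖ ≤ s → g x ≤ r) :
    s * ‖g‖ ≤ r := by
  have hr : 0 ≤ r := by simpa using h 0 (by simp [hs.le])
  have hb : ‖g‖ ≤ r / s := by
    apply ContinuousLinearMap.opNorm_le_bound _ (div_nonneg hr hs.le)
    intro x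
    rcases eq_or_ne x 0 with rfl | hx
    · simp
    · have hnx : 0 < ‖x‖ := norm_pos_iff.2 hx
      set y := (s / ‖x‖) • x with hy
      have hny : ‖y‖ = s := by
        rw [hy, norm_smul, Real.norm_eq_abs, abs_of_pos (div_pos hs hnx)]
        field_simp
      have h1 : g y ≤ r := h y (by rw [hny])
      have h2 : g (-y) ≤ r := h (-y) (by rw [norm_neg, hny])
      have habs : |g y| ≤ r := by
        rw [abs_le]; constructor
        · simpa using neg_le_neg h2 |>.trans_eq' (by simp)
        · exact h1
      have hgy : g y = (s / ‖x‖) * g x := by rw [hy, map_smul]; rfl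
      have : |g x| ≤ r * ‖x‖ / s := by
        rw [hgy] at habs
        rw [abs_mul, abs_of_pos (div_pos hs hnx)] at habs
        rw [le_div_iff₀ hs]
        have := mul_le_mul_of_nonneg_right habs hnx.le
        calc |g x| * s = s / ‖x‖ * |g x| * ‖x‖ := by field_simp
        _ ≤ r * ‖x‖ := this
      calc ‖g x‖ = |g x| := rfl
      _ ≤ r * ‖x‖ / s := this
      _ = r / s * ‖x‖ := by ring
  calc s * ‖g‖ ≤ s * (r / s) := by nlinarith [hs]
  _ = r := by field_simp

set_option maxHeartbeats 2000000 in
lemma key (f : X × StrongDual ℝ X → EReal)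
    (hne_bot : ∀ z, f z ≠ ⊥)
    (hconv : Convex ℝ {p : (X × StrongDual ℝ X) × ℝ | f p.1 ≤ (p.2 : EReal)})
    (hgeS : ∀ p, ((coupS X p : ℝ) : EReal) ≤ conjF X f p)
    (z' : X × StrongDual ℝ X) (u lam eps del : ℝ)
    (hu : f z' = ((coup X z' + u : ℝ) : EReal))
    (hlam : 0 < lam) (heps : 0 < eps) (hdel : 0 < del) (hule : u ≤ lam * eps) :
    ∃ w : X × StrongDual ℝ X, ‖w.1‖ ≤ lam ∧ ‖w.2‖ ≤ eps ∧
      f (z' + w) ≤ ((coup X z' + z'.2 w.1 + w.2 z'.1 + del : ℝ) : EReal) := by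
  classical
  by_cases hud : u ≤ del
  · refine ⟨0, by simp [hlam.le], by simp [heps.le], ?_⟩
    simp only [add_zero, Prod.fst_zero, Prod.snd_zero, map_zero,
      ContinuousLinearMap.zero_apply]
    rw [hu]
    exact_mod_cast (by linarith : coup X z' + u ≤ coup X z' + del)
  push_neg at hud
  by_contra hcon
  push_neg at hcon
  -- the "epigraph" set
  set SS : Set ((X × StrongDual ℝ X) × ℝ) :=
    {p | ∃ v : X × StrongDual ℝ X, ‖v.1‖ ≤ lam ∧ ‖v.2‖ ≤ eps ∧
      f (z' + (v - p.1)) ≤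
        ((coup X z' + z'.2 (v.1 - p.1.1) + (v.2 - p.1.2) z'.1 + p.2 : ℝ) : EReal)} with hSS
  have hSconv : Convex ℝ SS := by
    intro p hp q hq a b ha hb hab
    obtain ⟨v, hv1, hv2, hv3⟩ := hp
    obtain ⟨v', hv1', hv2', hv3'⟩ := hq
    refine ⟨a • v + b • v', ?_, ?_, ?_⟩
    · have : ‖a • v.1 + b • v'.1‖ ≤ a * ‖v.1‖ + b * ‖v'.1‖ := by
        refine (norm_add_le _ _).trans ?_
        simp [norm_smul, Real.norm_eq_abs, abs_of_nonneg ha, abs_of_nonneg hb]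
      have h2 : a * ‖v.1‖ + b * ‖v'.1‖ ≤ lam := by nlinarith
      exact le_trans this h2
    · have : ‖a • v.2 + b • v'.2‖ ≤ a * ‖v.2‖ + b * ‖v'.2‖ := by
        refine (norm_add_le _ _).trans ?_
        simp [norm_smul, Real.norm_eq_abs, abs_of_nonneg ha, abs_of_nonneg hb]
      have h2 : a * ‖v.2‖ + b * ‖v'.2‖ ≤ eps := by nlinarith
      exact le_trans this h2
    · have hm1 : ((z' + (v - p.1),
        coup X z' + z'.2 (v.1 - p.1.1) + (v.2 - p.1.2) z'.1 + p.2) :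
        (X × StrongDual ℝ X) × ℝ) ∈ {p : (X × StrongDual ℝ X) × ℝ | f p.1 ≤ (p.2 : EReal)} := hv3
      have hm2 : ((z' + (v' - q.1),
        coup X z' + z'.2 (v'.1 - q.1.1) + (v'.2 - q.1.2) z'.1 + q.2) :
        (X × StrongDual ℝ X) × ℝ) ∈ {p : (X × StrongDual ℝ X) × ℝ | f p.1 ≤ (p.2 : EReal)} := hv3'
      have hcomb := hconv hm1 hm2 ha hb hab
      simp only [Set.mem_setOf_eq, Prod.smul_mk, Prod.mk_add_mk, smul_eq_mul] at hcomb
      have hcomb' : f (a • (z' + (v - p.1)) + b • (z' + (v' - q.1))) ≤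
          ((a * (coup X z' + z'.2 (v.1 - p.1.1) + (v.2 - p.1.2) z'.1 + p.2)
            + b * (coup X z' + z'.2 (v'.1 - q.1.1) + (v'.2 - q.1.2) z'.1 + q.2) : ℝ) : EReal) := by
        exact_mod_cast hcomb
      have hvec : a • (z' + (v - p.1)) + b • (z' + (v' - q.1)) =
          z' + ((a • v + b • v') - (a • p + b • q).1) := by
        have hz : a • z' + b • z' = z' := by rw [← add_smul, hab, one_smul]
        simp only [Prod.fst_add, Prod.smul_fst]
        rw [smul_add, smul_add, smul_sub, smul_sub]
        rw [show a • z' + (a • v - a • p.1) + (b • z' + (b • v' - b • q.1))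
            = (a • z' + b • z') + ((a • v + b • v') - (a • p.1 + b • q.1)) by abel, hz]
      have hscal : a * (coup X z' + z'.2 (v.1 - p.1.1) + (v.2 - p.1.2) z'.1 + p.2)
          + b * (coup X z' + z'.2 (v'.1 - q.1.1) + (v'.2 - q.1.2) z'.1 + q.2)
          = coup X z' + z'.2 ((a • v + b • v').1 - (a • p + b • q).1.1)
            + ((a • v + b • v').2 - (a • p + b • q).1.2) z'.1 + (a • p + b • q).2 := by
        simp only [Prod.fst_add, Prod.snd_add, Prod.smul_fst, Prod.smul_snd, map_sub,
          map_add, map_smul, smul_eq_mul, ContinuousLinearMap.sub_apply,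
          ContinuousLinearMap.add_apply, ContinuousLinearMap.smul_apply]
        linear_combination (coup X z') * hab
      rw [hvec] at hcomb'
      refine hcomb'.trans (le_of_eq ?_)
      exact congrArg (fun x : ℝ => (x : EReal)) hscal
  -- open subset
  have hUoE : ∀ p : (X × StrongDual ℝ X) × ℝ, ‖p.1.1‖ < lam → ‖p.1.2‖ < eps → u < p.2 → p ∈ SS := by
    intro p h1 h2 h3
    refine ⟨p.1, h1.le, h2.le, ?_⟩
    rw [sub_self, add_zero, hu]
    have e1 : (p.1.1 - p.1.1 : X) = 0 := sub_self _
    have e2 : (p.1.2 - p.1.2 : StrongDual ℝ X) = 0 := sub_self _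
    rw [e1, e2, map_zero, ContinuousLinearMap.zero_apply]
    exact_mod_cast (by linarith : coup X z' + u ≤ coup X z' + 0 + 0 + p.2)
  have hopen : IsOpen ({p : (X × StrongDual ℝ X) × ℝ | ‖p.1.1‖ < lam} ∩
      ({p : (X × StrongDual ℝ X) × ℝ | ‖p.1.2‖ < eps} ∩ {p : (X × StrongDual ℝ X) × ℝ | u < p.2})) := by
    refine IsOpen.inter ?_ (IsOpen.inter ?_ ?_)
    · exact isOpen_lt (by fun_prop : Continuous fun p : (X × StrongDual ℝ X) × ℝ => ‖p.1.1‖)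
        continuous_const
    · exact isOpen_lt (by fun_prop : Continuous fun p : (X × StrongDual ℝ X) × ℝ => ‖p.1.2‖)
        continuous_const
    · exact isOpen_lt continuous_const continuous_snd
  have hsubint : ({p : (X × StrongDual ℝ X) × ℝ | ‖p.1.1‖ < lam} ∩
      ({p : (X × StrongDual ℝ X) × ℝ | ‖p.1.2‖ < eps} ∩ {p : (X × StrongDual ℝ X) × ℝ | u < p.2}))
      ⊆ interior SS := by
    apply interior_maximal _ hopen
    rintro p ⟨h1, h2, h3⟩
    exact hUoE p h1 h2 h3
  have hw0 : ((0 : X × StrongDual ℝ X), u + 1) ∈ interior SS := by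
    apply hsubint
    refine ⟨?_, ?_, ?_⟩ <;> simp [hlam, heps]
  have hxnot : ((0 : X × StrongDual ℝ X), del) ∉ interior SS := by
    intro hmem
    obtain ⟨v, hv1, hv2, hv3⟩ := interior_subset hmem
    rw [sub_zero] at hv3
    have := hcon v hv1 hv2
    rw [show (v.1 - (0 : X × StrongDual ℝ X).1) = v.1 by simp,
      show (v.2 - (0 : X × StrongDual ℝ X).2) = v.2 by simp] at hv3
    exact absurd hv3 (not_le.2 this)
  obtain ⟨φ, hφ⟩ := geometric_hahn_banach_open_point (hSconv.interior) isOpen_interior hxnot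
  -- extend the strict inequality from the interior to all of SS
  have hφE : ∀ p ∈ SS, φ p ≤ φ ((0 : X × StrongDual ℝ X), del) := by
    intro p hp
    by_contra hgt
    push_neg at hgt
    set d : ℝ := φ p - φ ((0 : X × StrongDual ℝ X), del) with hd
    have hd0 : 0 < d := by simp only [hd]; linarith
    set M : ℝ := |φ ((0 : X × StrongDual ℝ X), u + 1) - φ p| with hM
    have hM0 : 0 ≤ M := abs_nonneg _
    set a : ℝ := min 1 (d / (M + 1)) with ha
    have haux : 0 < d / (M + 1) := div_pos hd0 (by linarith)
    have ha0 : 0 < a := lt_min one_pos haux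
    have ha1 : a ≤ 1 := min_le_left _ _
    have haM : a * (M + 1) ≤ d := by
      have := min_le_right 1 (d / (M + 1))
      calc a * (M + 1) ≤ d / (M + 1) * (M + 1) := by
            apply mul_le_mul_of_nonneg_right this (by linarith)
      _ = d := by field_simp
    have hmem := hSconv.combo_interior_self_mem_interior hw0 hp ha0
      (by linarith : (0:ℝ) ≤ 1 - a) (by ring)
    have hlt := hφ _ hmem
    rw [map_add, map_smul, map_smul] at hlt
    have hlt' : a * φ ((0 : X × StrongDual ℝ X), u + 1) + (1 - a) * φ p
        < φ ((0 : X × StrongDual ℝ X), del) := by simpa [smul_eq_mul] using hlt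
    have hbd : -(a * M) ≤ a * (φ ((0 : X × StrongDual ℝ X), u + 1) - φ p) := by
      have := neg_abs_le (φ ((0 : X × StrongDual ℝ X), u + 1) - φ p)
      nlinarith
    nlinarith
  -- decompose the separating functional
  set s : ℝ := φ ((0 : X × StrongDual ℝ X), 1) with hs
  set q1 : StrongDual ℝ X := φ.comp ((ContinuousLinearMap.inl ℝ (X × StrongDual ℝ X) ℝ).comp
    (ContinuousLinearMap.inl ℝ X (StrongDual ℝ X))) with hq1
  set q2 : StrongDual ℝ (StrongDual ℝ X) := φ.comp ((ContinuousLinearMap.inl ℝ (X × StrongDual ℝ X) ℝ).comp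
    (ContinuousLinearMap.inr ℝ X (StrongDual ℝ X))) with hq2
  have hdec : ∀ p : (X × StrongDual ℝ X) × ℝ, φ p = q1 p.1.1 + q2 p.1.2 + p.2 * s := by
    intro p
    have hsplit : p = (((p.1.1, 0), 0) : (X × StrongDual ℝ X) × ℝ)
        + ((((0 : X), p.1.2), 0) + p.2 • (((0 : X), (0 : StrongDual ℝ X)), 1)) := by
      ext <;> simp
    have h0 := congrArg φ hsplit
    have e1 : φ (((p.1.1, 0), 0) : (X × StrongDual ℝ X) × ℝ) = q1 p.1.1 := by
      rw [hq1]; rfl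
    have e2 : φ ((((0 : X), p.1.2), 0) : (X × StrongDual ℝ X) × ℝ) = q2 p.1.2 := by
      rw [hq2]; rfl
    have e3 : φ ((((0 : X), (0 : StrongDual ℝ X)), 1) : (X × StrongDual ℝ X) × ℝ) = s := rfl
    rw [map_add, map_add, map_smul, e1, e2, e3, smul_eq_mul] at h0
    rw [h0]; ring
  have hphix : φ ((0 : X × StrongDual ℝ X), del) = del * s := by
    rw [hdec ((0 : X × StrongDual ℝ X), del)]; simp
  have hs0 : s < 0 := by
    have h1 := hφ _ hw0
    rw [hphix, hdec ((0 : X × StrongDual ℝ X), u + 1)] at h1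
    simp only [Prod.fst_zero, Prod.snd_zero, map_zero, zero_add] at h1
    nlinarith
  -- normalized functionals
  set r : ℝ := -s with hr
  have hrpos : 0 < r := by simp only [hr]; linarith
  set Q1 : StrongDual ℝ X := r⁻¹ • q1 with hQ1
  set Q2 : StrongDual ℝ (StrongDual ℝ X) := r⁻¹ • q2 with hQ2
  have hEQ : ∀ p ∈ SS, Q1 p.1.1 + Q2 p.1.2 - p.2 ≤ -del := by
    intro p hp
    have h1 := hφE p hp
    rw [hphix, hdec p] at h1
    have e1 : Q1 p.1.1 = r⁻¹ * q1 p.1.1 := by rw [hQ1]; simp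
    have e2 : Q2 p.1.2 = r⁻¹ * q2 p.1.2 := by rw [hQ2]; simp
    have hsr : s = -r := by rw [hr]; ring
    rw [hsr] at h1
    have h2 : q1 p.1.1 + q2 p.1.2 ≤ p.2 * r - del * r := by nlinarith
    have h3 := mul_le_mul_of_nonneg_left h2 (inv_pos.2 hrpos).le
    have h4 : r⁻¹ * (p.2 * r - del * r) = p.2 - del := by field_simp
    rw [e1, e2]
    rw [h4, mul_add] at h3
    linarith
  -- global affine minorant
  have hmin : ∀ v : X × StrongDual ℝ X, ‖v.1‖ ≤ lam → ‖v.2‖ ≤ eps → ∀ w : X × StrongDual ℝ X,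
      ((coup X z' + z'.2 (v.1 - w.1) + (v.2 - w.2) z'.1 + del + Q1 w.1 + Q2 w.2 : ℝ) : EReal)
        ≤ f (z' + (v - w)) := by
    intro v hv1 hv2 w
    by_cases htop : f (z' + (v - w)) = ⊤
    · rw [htop]; exact le_top
    · have hfeq : f (z' + (v - w)) = (((f (z' + (v - w))).toReal : ℝ) : EReal) :=
        (EReal.coe_toReal htop (hne_bot _)).symm
      set ρ : ℝ := (f (z' + (v - w))).toReal with hρ
      have hpE : ((w, ρ - (coup X z' + z'.2 (v.1 - w.1) + (v.2 - w.2) z'.1)) :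
          (X × StrongDual ℝ X) × ℝ) ∈ SS := by
        refine ⟨v, hv1, hv2, ?_⟩
        rw [hfeq]
        exact_mod_cast le_of_eq (by ring)
      have h5 := hEQ _ hpE
      dsimp only at h5
      rw [hfeq]
      exact_mod_cast (by linarith : coup X z' + z'.2 (v.1 - w.1) + (v.2 - w.2) z'.1
        + del + Q1 w.1 + Q2 w.2 ≤ ρ)
  -- conjugate bound
  have hkey : ∀ v : X × StrongDual ℝ X, ‖v.1‖ ≤ lam → ‖v.2‖ ≤ eps →
      del + Q1 v.1 + Q2 v.2 + Q2 Q1 ≤ 0 := by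
    intro v hv1 hv2
    set p1 : StrongDual ℝ X := z'.2 - Q1 with hp1
    set p2 : StrongDual ℝ (StrongDual ℝ X) := inclusionInDoubleDual ℝ X z'.1 - Q2 with hp2
    set K0 : ℝ := del + Q1 v.1 + Q2 v.2 + Q1 z'.1 + Q2 z'.2 - coup X z' with hK0
    have hconj : conjF X f (p1, p2) ≤ ((-K0 : ℝ) : EReal) := by
      simp only [conjF]
      refine iSup_le fun ζ => ?_
      have hm := hmin v hv1 hv2 (v - ζ + z')
      have hveq : z' + (v - (v - ζ + z')) = ζ := by abel
      rw [hveq] at hm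
      have halg : coup X z' + z'.2 (v.1 - (v - ζ + z').1) + (v.2 - (v - ζ + z').2) z'.1
          + del + Q1 (v - ζ + z').1 + Q2 (v - ζ + z').2 = p1 ζ.1 + p2 ζ.2 + K0 := by
        simp only [hp1, hp2, hK0, Prod.fst_add, Prod.fst_sub, Prod.snd_add, Prod.snd_sub,
          map_sub, map_add, ContinuousLinearMap.sub_apply, ContinuousLinearMap.add_apply,
          dual_def, coup]
        ring
      rw [halg] at hm
      by_cases ht : f ζ = ⊤
      · rw [ht, EReal.sub_top]; exact bot_le
      · have hfz : f ζ = (((f ζ).toReal : ℝ) : EReal) := (EReal.coe_toReal ht (hne_bot _)).symm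
        rw [hfz] at hm ⊢
        rw [← EReal.coe_sub]
        have hmr : p1 ζ.1 + p2 ζ.2 + K0 ≤ (f ζ).toReal := by exact_mod_cast hm
        exact_mod_cast (by linarith : p1 ζ.1 + p2 ζ.2 - (f ζ).toReal ≤ -K0)
    have h6 := (hgeS (p1, p2)).trans hconj
    have h7 : p2 p1 ≤ -K0 := by
      have : coupS X (p1, p2) = p2 p1 := rfl
      rw [this] at h6
      exact_mod_cast h6
    have hexp : p2 p1 = coup X z' - Q1 z'.1 - Q2 z'.2 + Q2 Q1 := by
      simp only [hp1, hp2, ContinuousLinearMap.sub_apply, map_sub, dual_def, coup]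
      ring
    rw [hexp, hK0] at h7
    linarith
  -- norm bounds
  have hwE : ∀ w : X × StrongDual ℝ X, ‖w.1‖ ≤ lam → ‖w.2‖ ≤ eps →
      Q1 w.1 + Q2 w.2 ≤ u - del := by
    intro w h1 h2
    have hpE : ((w, u) : (X × StrongDual ℝ X) × ℝ) ∈ SS := by
      refine ⟨w, h1, h2, ?_⟩
      rw [sub_self, add_zero, hu]
      have e1 : (w.1 - w.1 : X) = 0 := sub_self _
      have e2 : (w.2 - w.2 : StrongDual ℝ X) = 0 := sub_self _
      rw [e1, e2, map_zero, ContinuousLinearMap.zero_apply]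
      exact_mod_cast le_of_eq (by ring)
    have := hEQ _ hpE
    linarith
  have hB1 : ∀ w1 : X, ‖w1‖ ≤ lam → Q1 w1 + eps * ‖Q2‖ ≤ u - del := by
    intro w1 h1
    have := opnorm_aux (r := u - del - Q1 w1) Q2 heps (fun w2 h2 => by
      have h9 := hwE (w1, w2) h1 h2; dsimp only at h9; linarith)
    linarith
  have hA : lam * ‖Q1‖ + eps * ‖Q2‖ ≤ u - del := by
    have := opnorm_aux (r := u - del - eps * ‖Q2‖) Q1 hlam (fun w1 h1 => by
      have h9 := hB1 w1 h1; linarith)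
    linarith
  have hB2 : ∀ w1 : X, ‖w1‖ ≤ lam → Q1 w1 + eps * ‖Q2‖ ≤ -del - Q2 Q1 := by
    intro w1 h1
    have := opnorm_aux (r := -del - Q2 Q1 - Q1 w1) Q2 heps (fun w2 h2 => by
      have h9 := hkey (w1, w2) h1 h2; dsimp only at h9; linarith)
    linarith
  have hA2 : lam * ‖Q1‖ + eps * ‖Q2‖ ≤ -del - Q2 Q1 := by
    have := opnorm_aux (r := -del - Q2 Q1 - eps * ‖Q2‖) Q1 hlam (fun w1 h1 => by
      have h9 := hB2 w1 h1; linarith)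
    linarith
  have hQQ : -(‖Q2‖ * ‖Q1‖) ≤ Q2 Q1 := by
    have h8 := Q2.le_opNorm Q1
    rw [Real.norm_eq_abs] at h8
    have := neg_abs_le (Q2 Q1)
    linarith
  have hApos : (0:ℝ) ≤ ‖Q1‖ := norm_nonneg _
  have hBpos : (0:ℝ) ≤ ‖Q2‖ := ContinuousLinearMap.opNorm_nonneg _
  have hAe : ‖Q1‖ < eps := by nlinarith
  have hBl : ‖Q2‖ < lam := by nlinarith
  have hprod : (eps - ‖Q1‖) * (lam - ‖Q2‖) ≤ eps * lam := by
    apply mul_le_mul (by linarith) (by linarith) (by linarith) (by linarith)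
  nlinarith

set_option maxHeartbeats 2000000 in
lemma step (f : X × StrongDual ℝ X → EReal)
    (hne_bot : ∀ z, f z ≠ ⊥)
    (hconv : Convex ℝ {p : (X × StrongDual ℝ X) × ℝ | f p.1 ≤ (p.2 : EReal)})
    (hge : ∀ z, ((coup X z : ℝ) : EReal) ≤ f z)
    (hgeS : ∀ p, ((coupS X p : ℝ) : EReal) ≤ conjF X f p)
    (theta : ℝ) (htheta : 0 < theta)
    (z : X × StrongDual ℝ X) (u : ℝ)
    (hu : f z = ((coup X z + u : ℝ) : EReal)) (hu0 : 0 < u) :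
    ∃ (z' : X × StrongDual ℝ X) (u' : ℝ),
      f z' = ((coup X z' + u' : ℝ) : EReal) ∧ 0 ≤ u' ∧ u' ≤ (13/16) * u ∧
      ‖z'.1 - z.1‖ ≤ (theta/2) * Real.sqrt u ∧
      ‖z'.2 - z.2‖ ≤ Real.sqrt u / (2*theta) := by
  have hsq : 0 < Real.sqrt u := Real.sqrt_pos.2 hu0
  set lam : ℝ := theta * Real.sqrt u with hlamdef
  set eps : ℝ := Real.sqrt u / theta with hepsdef
  have hlam : 0 < lam := mul_pos htheta hsq
  have heps : 0 < eps := div_pos hsq htheta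
  have hle : lam * eps = u := by
    rw [hlamdef, hepsdef]
    field_simp
    linear_combination Real.mul_self_sqrt hu0.le
  obtain ⟨w, hw1, hw2, hw3⟩ := key f hne_bot hconv hgeS z u lam eps (u/8) hu hlam heps
    (by linarith) (le_of_eq hle.symm)
  -- convex combination
  have hm1 : ((z, coup X z + u) : (X × StrongDual ℝ X) × ℝ) ∈
      {p : (X × StrongDual ℝ X) × ℝ | f p.1 ≤ (p.2 : EReal)} := le_of_eq hu
  have hm2 : ((z + w, coup X z + z.2 w.1 + w.2 z.1 + u/8) : (X × StrongDual ℝ X) × ℝ) ∈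
      {p : (X × StrongDual ℝ X) × ℝ | f p.1 ≤ (p.2 : EReal)} := hw3
  have hcomb := hconv hm1 hm2 (by norm_num : (0:ℝ) ≤ 2⁻¹) (by norm_num : (0:ℝ) ≤ 2⁻¹)
    (by norm_num)
  simp only [Set.mem_setOf_eq, Prod.smul_mk, Prod.mk_add_mk, smul_eq_mul] at hcomb
  have hvec : (2⁻¹ : ℝ) • z + (2⁻¹ : ℝ) • (z + w) = z + (2⁻¹ : ℝ) • w := by
    rw [smul_add, ← add_assoc, ← add_smul]
    norm_num
  rw [hvec] at hcomb
  -- upper bound for f at the midpoint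
  have hub : f (z + (2⁻¹ : ℝ) • w) ≤
      ((2⁻¹ * (coup X z + u) + 2⁻¹ * (coup X z + z.2 w.1 + w.2 z.1 + u/8) : ℝ) : EReal) :=
    hcomb
  -- lower bound
  have hlb := hge (z + (2⁻¹ : ℝ) • w)
  have hnetop : f (z + (2⁻¹ : ℝ) • w) ≠ ⊤ := by
    intro h
    rw [h] at hub
    exact EReal.coe_ne_top _ (top_le_iff.1 hub)
  have hfeq : f (z + (2⁻¹ : ℝ) • w) = (((f (z + (2⁻¹ : ℝ) • w)).toReal : ℝ) : EReal) :=
    (EReal.coe_toReal hnetop (hne_bot _)).symm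
  set ρ : ℝ := (f (z + (2⁻¹ : ℝ) • w)).toReal with hρ
  set u' : ℝ := ρ - coup X (z + (2⁻¹ : ℝ) • w) with hu'
  have hcoupmid : coup X (z + (2⁻¹ : ℝ) • w) =
      coup X z + 2⁻¹ * z.2 w.1 + 2⁻¹ * w.2 z.1 + 2⁻¹ * 2⁻¹ * w.2 w.1 := by
    simp only [coup, Prod.fst_add, Prod.snd_add, Prod.smul_fst, Prod.smul_snd,
      map_add, map_smul, ContinuousLinearMap.add_apply, ContinuousLinearMap.smul_apply,
      smul_eq_mul]
    ring
  have hubr : ρ ≤ 2⁻¹ * (coup X z + u) + 2⁻¹ * (coup X z + z.2 w.1 + w.2 z.1 + u/8) := by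
    rw [hfeq] at hub
    exact_mod_cast hub
  have hlbr : coup X (z + (2⁻¹ : ℝ) • w) ≤ ρ := by
    rw [hfeq] at hlb
    exact_mod_cast hlb
  have hwprod : -(eps * lam) ≤ w.2 w.1 ∧ w.2 w.1 ≤ eps * lam := by
    constructor
    · have h8 := w.2.le_opNorm w.1
      rw [Real.norm_eq_abs] at h8
      have h9 : |w.2 w.1| ≤ eps * lam := h8.trans (by nlinarith [norm_nonneg w.1, norm_nonneg w.2])
      linarith [neg_abs_le (w.2 w.1)]
    · have h8 := w.2.le_opNorm w.1
      rw [Real.norm_eq_abs] at h8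
      have h9 : |w.2 w.1| ≤ eps * lam := h8.trans (by nlinarith [norm_nonneg w.1, norm_nonneg w.2])
      linarith [le_abs_self (w.2 w.1)]
  refine ⟨z + (2⁻¹ : ℝ) • w, u', by rw [hfeq, hu']; norm_cast; ring,
    by rw [hu']; linarith, ?_, ?_, ?_⟩
  · rw [hu', hcoupmid]
    have : eps * lam = u := by rw [mul_comm]; exact hle
    nlinarith [hwprod.1, hwprod.2]
  · have : (z + (2⁻¹ : ℝ) • w).1 - z.1 = (2⁻¹ : ℝ) • w.1 := by
      simp only [Prod.fst_add, Prod.smul_fst]; abel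
    rw [this, norm_smul, Real.norm_eq_abs]
    rw [hlamdef] at hw1
    rw [abs_of_pos (by norm_num : (0:ℝ) < 2⁻¹)]
    nlinarith
  · have : (z + (2⁻¹ : ℝ) • w).2 - z.2 = (2⁻¹ : ℝ) • w.2 := by
      simp only [Prod.snd_add, Prod.smul_snd]; abel
    rw [this, norm_smul, Real.norm_eq_abs]
    rw [hepsdef] at hw2
    rw [abs_of_pos (by norm_num : (0:ℝ) < 2⁻¹)]
    rw [le_div_iff₀ htheta] at hw2
    rw [le_div_iff₀ (by linarith : (0:ℝ) < 2*theta)]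
    nlinarith

set_option maxHeartbeats 2000000 in
lemma approx [CompleteSpace X] (f : X × StrongDual ℝ X → EReal)
    (hne_bot : ∀ z, f z ≠ ⊥)
    (hconv : Convex ℝ {p : (X × StrongDual ℝ X) × ℝ | f p.1 ≤ (p.2 : EReal)})
    (hge : ∀ z, ((coup X z : ℝ) : EReal) ≤ f z)
    (hgeS : ∀ p, ((coupS X p : ℝ) : EReal) ≤ conjF X f p)
    (hlsc : LowerSemicontinuous f)
    (theta : ℝ) (htheta : 0 < theta)
    (z0 : X × StrongDual ℝ X) (u0 : ℝ)
    (hu0 : f z0 = ((coup X z0 + u0 : ℝ) : EReal)) (h00 : 0 ≤ u0) :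
    ∃ zb ∈ Mset X f,
      ‖zb.1 - z0.1‖ ≤ (theta/2) * Real.sqrt u0 / (1 - Real.sqrt (13/16)) ∧
      ‖zb.2 - z0.2‖ ≤ (Real.sqrt u0 / (2*theta)) / (1 - Real.sqrt (13/16)) := by
  classical
  set rho : ℝ := Real.sqrt (13/16) with hrho
  have hrho0 : 0 ≤ rho := Real.sqrt_nonneg _
  have hrho1 : rho < 1 := by
    rw [hrho, show (1:ℝ) = Real.sqrt 1 by simp]
    exact Real.sqrt_lt_sqrt (by norm_num) (by norm_num)
  -- one step on the subtype
  have hstep : ∀ s : {p : (X × StrongDual ℝ X) × ℝ //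
        f p.1 = ((coup X p.1 + p.2 : ℝ) : EReal) ∧ 0 ≤ p.2},
      ∃ t : {p : (X × StrongDual ℝ X) × ℝ //
        f p.1 = ((coup X p.1 + p.2 : ℝ) : EReal) ∧ 0 ≤ p.2},
        t.1.2 ≤ (13/16) * s.1.2 ∧
        ‖t.1.1.1 - s.1.1.1‖ ≤ (theta/2) * Real.sqrt s.1.2 ∧
        ‖t.1.1.2 - s.1.1.2‖ ≤ Real.sqrt s.1.2 / (2*theta) := by
    rintro ⟨⟨z, u⟩, hz, hu⟩
    rcases eq_or_lt_of_le hu with h0 | h0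
    · refine ⟨⟨(z, u), hz, hu⟩, ?_, ?_, ?_⟩
      · simp only []
        nlinarith [h0.symm ▸ le_refl (0:ℝ)]
      · simp only [sub_self, norm_zero]
        positivity
      · simp only [sub_self, norm_zero]
        positivity
    · obtain ⟨z', u', h1, h2, h3, h4, h5⟩ :=
        step f hne_bot hconv hge hgeS theta htheta z u hz h0
      exact ⟨⟨(z', u'), h1, h2⟩, h3, h4, h5⟩
  let seq : ℕ → {p : (X × StrongDual ℝ X) × ℝ //
      f p.1 = ((coup X p.1 + p.2 : ℝ) : EReal) ∧ 0 ≤ p.2} := fun n =>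
    Nat.rec (motive := fun _ => {p : (X × StrongDual ℝ X) × ℝ //
      f p.1 = ((coup X p.1 + p.2 : ℝ) : EReal) ∧ 0 ≤ p.2})
      ⟨(z0, u0), hu0, h00⟩ (fun _ s => (hstep s).choose) n
  have hse0 : (seq 0).1 = (z0, u0) := rfl
  have hdec1 : ∀ n, (seq (n+1)).1.2 ≤ (13/16) * (seq n).1.2 :=
    fun n => (hstep (seq n)).choose_spec.1
  have hpos : ∀ n, 0 ≤ (seq n).1.2 := fun n => (seq n).2.2
  have hub : ∀ n, (seq n).1.2 ≤ u0 * (13/16) ^ n := by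
    intro n
    induction n with
    | zero => simp [hse0]
    | succ n ih =>
      calc (seq (n+1)).1.2 ≤ (13/16) * (seq n).1.2 := hdec1 n
      _ ≤ (13/16) * (u0 * (13/16) ^ n) := by nlinarith
      _ = u0 * (13/16) ^ (n+1) := by ring
  have hsqb : ∀ n, Real.sqrt (seq n).1.2 ≤ Real.sqrt u0 * rho ^ n := by
    intro n
    induction n with
    | zero => simp [hse0]
    | succ n ih =>
      have h1 : Real.sqrt (seq (n+1)).1.2 ≤ Real.sqrt ((13/16) * (seq n).1.2) :=
        Real.sqrt_le_sqrt (hdec1 n)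
      rw [Real.sqrt_mul (by norm_num : (0:ℝ) ≤ 13/16)] at h1
      calc Real.sqrt (seq (n+1)).1.2 ≤ rho * Real.sqrt (seq n).1.2 := h1
      _ ≤ rho * (Real.sqrt u0 * rho ^ n) := mul_le_mul_of_nonneg_left ih hrho0
      _ = Real.sqrt u0 * rho ^ (n+1) := by ring
  have hd1 : ∀ n, dist ((seq n).1.1.1) ((seq (n+1)).1.1.1) ≤
      ((theta/2) * Real.sqrt u0) * rho ^ n := by
    intro n
    rw [dist_comm, dist_eq_norm]
    refine ((hstep (seq n)).choose_spec.2.1).trans ?_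
    have h1 := hsqb n
    nlinarith [Real.sqrt_nonneg (seq n).1.2]
  have hd2 : ∀ n, dist ((seq n).1.1.2) ((seq (n+1)).1.1.2) ≤
      (Real.sqrt u0 / (2*theta)) * rho ^ n := by
    intro n
    rw [dist_comm, dist_eq_norm]
    refine ((hstep (seq n)).choose_spec.2.2).trans ?_
    have h1 := hsqb n
    rw [div_mul_eq_mul_div, div_le_div_iff₀ (by linarith : (0:ℝ) < 2*theta)
      (by linarith : (0:ℝ) < 2*theta)]
    nlinarith [Real.sqrt_nonneg (seq n).1.2, pow_nonneg hrho0 n,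
      Real.sqrt_nonneg u0]
  have hcauchy : CauchySeq (fun n => (seq n).1.1) := by
    apply cauchySeq_of_le_geometric rho
      ((theta/2) * Real.sqrt u0 + Real.sqrt u0 / (2*theta)) hrho1
    intro n
    rw [Prod.dist_eq]
    have h1 := hd1 n
    have h2 := hd2 n
    have hpow : (0:ℝ) ≤ rho ^ n := pow_nonneg hrho0 n
    have hBn : (0:ℝ) ≤ Real.sqrt u0 / (2*theta) * rho ^ n := by positivity
    have hAn : (0:ℝ) ≤ theta / 2 * Real.sqrt u0 * rho ^ n := by positivity
    apply max_le
    · linarith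
    · linarith
  obtain ⟨zb, hzb⟩ := cauchySeq_tendsto_of_complete hcauchy
  have ht1 : Filter.Tendsto (fun n => (seq n).1.1.1) Filter.atTop (nhds zb.1) :=
    (continuous_fst.tendsto zb).comp hzb
  have ht2 : Filter.Tendsto (fun n => (seq n).1.1.2) Filter.atTop (nhds zb.2) :=
    (continuous_snd.tendsto zb).comp hzb
  have hb1 : dist ((seq 0).1.1.1) zb.1 ≤ ((theta/2) * Real.sqrt u0) / (1 - rho) :=
    dist_le_of_le_geometric_of_tendsto₀ rho _ hrho1 hd1 ht1
  have hb2 : dist ((seq 0).1.1.2) zb.2 ≤ (Real.sqrt u0 / (2*theta)) / (1 - rho) :=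
    dist_le_of_le_geometric_of_tendsto₀ rho _ hrho1 hd2 ht2
  -- limit of the gaps is 0
  have hulim : Filter.Tendsto (fun n => (seq n).1.2) Filter.atTop (nhds 0) := by
    have hgeo : Filter.Tendsto (fun n : ℕ => u0 * (13/16) ^ n) Filter.atTop (nhds 0) := by
      have := (tendsto_pow_atTop_nhds_zero_of_lt_one
        (by norm_num : (0:ℝ) ≤ 13/16) (by norm_num)).const_mul u0
      simpa using this
    exact squeeze_zero hpos hub hgeo
  have hcoupcont : Continuous (coup X) :=
    (isBoundedBilinearMap_apply.continuous).comp continuous_swap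
  have hclim : Filter.Tendsto (fun n => coup X ((seq n).1.1)) Filter.atTop
      (nhds (coup X zb)) := ((hcoupcont.tendsto zb).comp hzb)
  have hflim : Filter.Tendsto (fun n => coup X ((seq n).1.1) + (seq n).1.2)
      Filter.atTop (nhds (coup X zb)) := by
    have := hclim.add hulim
    simpa using this
  -- f zb ≤ c zb by lower semicontinuity
  have hle : f zb ≤ ((coup X zb : ℝ) : EReal) := by
    by_contra hlt
    push_neg at hlt
    obtain ⟨b, hb1', hb2'⟩ := exists_between hlt
    have hbtop : b ≠ ⊤ := fun h => not_top_lt (h ▸ hb2')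
    have hbbot : b ≠ ⊥ := fun h => by
      rw [h] at hb1'; exact (not_lt_bot hb1')
    have hbeq : b = ((b.toReal : ℝ) : EReal) := (EReal.coe_toReal hbtop hbbot).symm
    have hev := hlsc zb b hb2'
    have hev2 : ∀ᶠ n in Filter.atTop, b < f ((seq n).1.1) := hzb.eventually hev
    have hev3 : ∀ᶠ n in Filter.atTop,
        b.toReal ≤ coup X ((seq n).1.1) + (seq n).1.2 := by
      filter_upwards [hev2] with n hn
      rw [(seq n).2.1, hbeq] at hn
      exact_mod_cast hn.le
    have hge' : b.toReal ≤ coup X zb := ge_of_tendsto hflim hev3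
    have hblt : coup X zb < b.toReal := by
      rw [hbeq] at hb1'; exact_mod_cast hb1'
    linarith
  refine ⟨zb, le_antisymm hle (hge zb), ?_, ?_⟩
  · rw [← dist_eq_norm, dist_comm]
    exact hb1
  · rw [← dist_eq_norm, dist_comm]
    exact hb2


end Aux

/-- for `f ∈ G_s(Z)`, `cl(dom M_f) = cl(Pr_X(dom f))` and
`cl(Im M_f) = cl(Pr_{X*}(dom f))` (norm closures); in particular both closures are convex. -/
theorem stmt8 {X : Type*} [NormedAddCommGroup X] [NormedSpace ℝ X] [CompleteSpace X]
    (f : X × StrongDual ℝ X → EReal)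
    (hne_bot : ∀ z, f z ≠ ⊥) (hproper : ∃ z, f z ≠ ⊤)
    (hconv : Convex ℝ {p : (X × StrongDual ℝ X) × ℝ | f p.1 ≤ (p.2 : EReal)})
    (hge : ∀ z, ((coup X z : ℝ) : EReal) ≤ f z)
    (hgeS : ∀ p, ((coupS X p : ℝ) : EReal) ≤ conjF X f p)
    (hlsc : LowerSemicontinuous f) :
    closure (Prod.fst '' Mset X f) = closure (Prod.fst '' {z | f z ≠ ⊤}) ∧
    closure (Prod.snd '' Mset X f) = closure (Prod.snd '' {z | f z ≠ ⊤}) ∧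
    Convex ℝ (closure (Prod.fst '' Mset X f)) ∧
    Convex ℝ (closure (Prod.snd '' Mset X f)) := by
  have hdomconv : Convex ℝ {z : X × StrongDual ℝ X | f z ≠ ⊤} := by
    intro a ha b hb s t hs ht hst
    have hfa : f a = (((f a).toReal : ℝ) : EReal) := (EReal.coe_toReal ha (hne_bot a)).symm
    have hfb : f b = (((f b).toReal : ℝ) : EReal) := (EReal.coe_toReal hb (hne_bot b)).symm
    have hm1 : ((a, (f a).toReal) : (X × StrongDual ℝ X) × ℝ) ∈
        {p : (X × StrongDual ℝ X) × ℝ | f p.1 ≤ (p.2 : EReal)} := le_of_eq hfa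
    have hm2 : ((b, (f b).toReal) : (X × StrongDual ℝ X) × ℝ) ∈
        {p : (X × StrongDual ℝ X) × ℝ | f p.1 ≤ (p.2 : EReal)} := le_of_eq hfb
    have hcomb := hconv hm1 hm2 hs ht hst
    simp only [Set.mem_setOf_eq, Prod.smul_mk, Prod.mk_add_mk, smul_eq_mul] at hcomb
    simp only [Set.mem_setOf_eq]
    intro htop
    rw [htop] at hcomb
    exact EReal.coe_ne_top _ (top_le_iff.1 hcomb)
  have hMsub : Mset X f ⊆ {z | f z ≠ ⊤} := fun z hz => by
    have : f z = ((coup X z : ℝ) : EReal) := hz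
    simp only [Set.mem_setOf_eq, this]
    exact EReal.coe_ne_top _
  have hsub1 : closure (Prod.fst '' Mset X f) ⊆ closure (Prod.fst '' {z | f z ≠ ⊤}) :=
    closure_mono (Set.image_mono hMsub)
  have hsub2 : closure (Prod.snd '' Mset X f) ⊆ closure (Prod.snd '' {z | f z ≠ ⊤}) :=
    closure_mono (Set.image_mono hMsub)
  have hrho1 : Real.sqrt (13/16) < 1 := by
    rw [show (1:ℝ) = Real.sqrt 1 by simp]
    exact Real.sqrt_lt_sqrt (by norm_num) (by norm_num)
  set c : ℝ := 1 - Real.sqrt (13/16) with hc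
  have hc0 : 0 < c := by rw [hc]; linarith
  have hrev : ∀ z0 : X × StrongDual ℝ X, f z0 ≠ ⊤ →
      z0.1 ∈ closure (Prod.fst '' Mset X f) ∧
      z0.2 ∈ closure (Prod.snd '' Mset X f) := by
    intro z0 htop
    have hfeq : f z0 = (((f z0).toReal : ℝ) : EReal) := (EReal.coe_toReal htop (hne_bot _)).symm
    set u0 : ℝ := (f z0).toReal - coup X z0 with hu0def
    have hu0 : f z0 = ((coup X z0 + u0 : ℝ) : EReal) := by rw [hfeq]; norm_cast; ring
    have h00 : 0 ≤ u0 := by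
      have h9 := hge z0
      rw [hfeq] at h9
      have h10 : coup X z0 ≤ (f z0).toReal := by exact_mod_cast h9
      rw [hu0def]; linarith
    set s : ℝ := Real.sqrt u0 with hsdef
    have hs0 : 0 ≤ s := Real.sqrt_nonneg _
    constructor
    · rw [Metric.mem_closure_iff]
      intro ε hε
      set theta : ℝ := ε * c / (s + 1) with hθ
      have hθ0 : 0 < theta := by positivity
      obtain ⟨zb, hzb, hzb1, _⟩ :=
        approx f hne_bot hconv hge hgeS hlsc theta hθ0 z0 u0 hu0 h00
      refine ⟨zb.1, Set.mem_image_of_mem _ hzb, ?_⟩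
      rw [dist_comm, dist_eq_norm]
      refine lt_of_le_of_lt hzb1 ?_
      rw [← hsdef, ← hc]
      have hval : theta / 2 * s / c = ε * s / (2 * (s + 1)) := by
        rw [hθ]; field_simp
      rw [hval, div_lt_iff₀ (by positivity : (0:ℝ) < 2 * (s + 1))]
      nlinarith
    · rw [Metric.mem_closure_iff]
      intro ε hε
      set theta : ℝ := (s + 1) / (ε * c) with hθ
      have hθ0 : 0 < theta := by positivity
      obtain ⟨zb, hzb, _, hzb2⟩ :=
        approx f hne_bot hconv hge hgeS hlsc theta hθ0 z0 u0 hu0 h00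
      refine ⟨zb.2, Set.mem_image_of_mem _ hzb, ?_⟩
      rw [dist_comm, dist_eq_norm]
      refine lt_of_le_of_lt hzb2 ?_
      rw [← hsdef, ← hc]
      have hval : s / (2 * theta) / c = ε * s / (2 * (s + 1)) := by
        rw [hθ]; field_simp
      rw [hval, div_lt_iff₀ (by positivity : (0:ℝ) < 2 * (s + 1))]
      nlinarith
  have h1 : closure (Prod.fst '' Mset X f) = closure (Prod.fst '' {z | f z ≠ ⊤}) := by
    apply Set.Subset.antisymm hsub1
    apply closure_minimal _ isClosed_closure
    rintro x ⟨w, hw, rfl⟩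
    exact (hrev w hw).1
  have h2 : closure (Prod.snd '' Mset X f) = closure (Prod.snd '' {z | f z ≠ ⊤}) := by
    apply Set.Subset.antisymm hsub2
    apply closure_minimal _ isClosed_closure
    rintro x ⟨w, hw, rfl⟩
    exact (hrev w hw).2
  refine ⟨h1, h2, ?_, ?_⟩
  · rw [h1]
    have himg : Prod.fst '' {z : X × StrongDual ℝ X | f z ≠ ⊤} =
        (LinearMap.fst ℝ X (StrongDual ℝ X)) '' {z | f z ≠ ⊤} := rfl
    rw [himg]
    exact (hdomconv.linear_image _).closure
  · rw [h2]
    have himg : Prod.snd '' {z : X × StrongDual ℝ X | f z ≠ ⊤} =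
        (LinearMap.snd ℝ X (StrongDual ℝ X)) '' {z | f z ≠ ⊤} := rfl
    rw [himg]
    exact (hdomconv.linear_image _).closure
end
end

section
/- Let X and Y be real Hausdorff locally convex spaces with topological duals X* and Y*, and let F ⊆ (X × Y) × (X* × Y*) be maximal monotone for the coupling c((x,y),(x*,y*)) := ⟨x,x*⟩ + ⟨y,y*⟩. Then Pr_Y(dom φ_F) is contained in the closed affine hull of Pr_Y(F), where Pr_Y(F) := {y : ∃(x,x*,y*), (x,y,x*,y*) ∈ F} and Pr_Y(dom φ_F) := {y : ∃(x,x*,y*), φ_F(x,y,x*,y*) < +∞}. -/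
noncomputable section

variable {X Y : Type*}
  [AddCommGroup X] [Module ℝ X] [TopologicalSpace X] [IsTopologicalAddGroup X]
  [ContinuousSMul ℝ X] [LocallyConvexSpace ℝ X] [T2Space X]
  [AddCommGroup Y] [Module ℝ Y] [TopologicalSpace Y] [IsTopologicalAddGroup Y]
  [ContinuousSMul ℝ Y] [LocallyConvexSpace ℝ Y] [T2Space Y]

/-- The coupling `c((x,y),(x*,y*)) = ⟨x,x*⟩ + ⟨y,y*⟩` on `(X × Y) × (X* × Y*)`. -/
def coup2 (w : (X × Y) × ((X →L[ℝ] ℝ) × (Y →L[ℝ] ℝ))) : ℝ :=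
  w.2.1 w.1.1 + w.2.2 w.1.2

/-- The duality pairing `⟨z, w⟩ = ⟨x_z, w*⟩ + ⟨x_w, z*⟩` between two points of
`(X × Y) × (X* × Y*)`. -/
def pair2 (z w : (X × Y) × ((X →L[ℝ] ℝ) × (Y →L[ℝ] ℝ))) : ℝ :=
  w.2.1 z.1.1 + w.2.2 z.1.2 + z.2.1 w.1.1 + z.2.2 w.1.2

/-- Monotonicity for `F ⊆ (X × Y) × (X* × Y*)`. -/
def IsMono2 (F : Set ((X × Y) × ((X →L[ℝ] ℝ) × (Y →L[ℝ] ℝ)))) : Prop :=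
  ∀ p ∈ F, ∀ q ∈ F,
    0 ≤ (p.2.1 - q.2.1) (p.1.1 - q.1.1) + (p.2.2 - q.2.2) (p.1.2 - q.1.2)

/-- Maximal monotonicity. -/
def IsMaxMono2 (F : Set ((X × Y) × ((X →L[ℝ] ℝ) × (Y →L[ℝ] ℝ)))) : Prop :=
  IsMono2 F ∧ ∀ G, IsMono2 G → F ⊆ G → G = F

/-- The Fitzpatrick function of `F`. -/
def fitz2 (F : Set ((X × Y) × ((X →L[ℝ] ℝ) × (Y →L[ℝ] ℝ))))
    (z : (X × Y) × ((X →L[ℝ] ℝ) × (Y →L[ℝ] ℝ))) : EReal :=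
  ⨆ w : F, ((pair2 z (w : (X × Y) × ((X →L[ℝ] ℝ) × (Y →L[ℝ] ℝ)))
      - coup2 (w : (X × Y) × ((X →L[ℝ] ℝ) × (Y →L[ℝ] ℝ)) ) : ℝ) : EReal)

/-- if `X, Y` are real Hausdorff locally convex spaces and
`F ⊆ (X × Y) × (X* × Y*)` is maximal monotone, then
`Pr_Y(dom φ_F) ⊆ closed affine hull of Pr_Y(F)`. -/
theorem stmt13 (F : Set ((X × Y) × ((X →L[ℝ] ℝ) × (Y →L[ℝ] ℝ))))
    (hF : IsMaxMono2 F) :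
    {y : Y | ∃ (x : X) (xs : X →L[ℝ] ℝ) (ys : Y →L[ℝ] ℝ),
        fitz2 F ((x, y), (xs, ys)) ≠ ⊤}
      ⊆ closure (affineSpan ℝ {y : Y | ∃ (x : X) (xs : X →L[ℝ] ℝ) (ys : Y →L[ℝ] ℝ),
          ((x, y), (xs, ys)) ∈ F} : Set Y) := by
  rintro y ⟨x, xs, ys, hfin⟩
  by_contra hy
  set S : Set Y := {y : Y | ∃ (x : X) (xs : X →L[ℝ] ℝ) (ys : Y →L[ℝ] ℝ),
          ((x, y), (xs, ys)) ∈ F} with hSdef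
  -- F is nonempty
  obtain ⟨p0, hp0⟩ : F.Nonempty := by
    rcases F.eq_empty_or_nonempty with h | h
    · exfalso
      have hmono : IsMono2 ({(((0 : X), (0 : Y)), ((0 : X →L[ℝ] ℝ), (0 : Y →L[ℝ] ℝ)))} :
          Set ((X × Y) × ((X →L[ℝ] ℝ) × (Y →L[ℝ] ℝ)))) := by
        rintro p hp q hq
        simp only [Set.mem_singleton_iff] at hp hq
        subst hp; subst hq; simp
      have := hF.2 _ hmono (by simp [h])
      rw [h] at this
      exact absurd this (by simp [Set.eq_empty_iff_forall_notMem])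
    · exact h
  have hv0S : p0.1.2 ∈ S := ⟨p0.1.1, p0.2.1, p0.2.2, by simpa using hp0⟩
  set v0 : Y := p0.1.2
  -- separate y from the closed affine hull
  obtain ⟨f, u, hfu, huy⟩ := geometric_hahn_banach_closed_point
    (Convex.closure (affineSpan ℝ S).convex) isClosed_closure hy
  have hspan : ∀ b ∈ S, (b : Y) ∈ closure ((affineSpan ℝ S : Set Y)) :=
    fun b hb => subset_closure (subset_affineSpan ℝ S hb)
  -- f is constant on S
  have hconst : ∀ b ∈ S, f b = f v0 := by
    intro b hb
    by_contra hne
    have hδ : f b - f v0 ≠ 0 := sub_ne_zero.mpr hne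
    set t : ℝ := (u - f v0 + 1) / (f b - f v0)
    have hmem : t • (b - v0) + v0 ∈ (affineSpan ℝ S : Set Y) := by
      have := (affineSpan ℝ S).smul_vsub_vadd_mem t (subset_affineSpan ℝ S hb)
        (subset_affineSpan ℝ S hv0S) (subset_affineSpan ℝ S hv0S)
      simpa [vsub_eq_sub, vadd_eq_add] using this
    have hlt := hfu _ (subset_closure hmem)
    have : f (t • (b - v0) + v0) = u + 1 := by
      rw [map_add, map_smul, map_sub]
      rw [smul_eq_mul, show t = (u - f v0 + 1) / (f b - f v0) from rfl, div_mul_cancel₀ _ hδ]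
      ring
    rw [this] at hlt
    linarith
  have hfy : f v0 < u := hfu _ (hspan v0 hv0S)
  -- f y > u
  have hα : 0 < f y - f v0 := by linarith
  -- for every t ≥ 0, the tilted point is in F
  have hkey : ∀ t : ℝ, ((p0.1.1, v0), (p0.2.1, p0.2.2 + t • f)) ∈ F := by
    intro t
    set q : (X × Y) × ((X →L[ℝ] ℝ) × (Y →L[ℝ] ℝ)) := ((p0.1.1, v0), (p0.2.1, p0.2.2 + t • f))
    have hq2 : ∀ p ∈ F,
        0 ≤ (q.2.1 - p.2.1) (q.1.1 - p.1.1) + (q.2.2 - p.2.2) (q.1.2 - p.1.2) := by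
      intro p hp
      have hbase := hF.1 p0 hp0 p hp
      have hpS : p.1.2 ∈ S := ⟨p.1.1, p.2.1, p.2.2, by simpa using hp⟩
      have hfp : f p.1.2 = f v0 := hconst _ hpS
      have hq : (q.2.1 - p.2.1) (q.1.1 - p.1.1) + (q.2.2 - p.2.2) (q.1.2 - p.1.2)
          = (p0.2.1 - p.2.1) (p0.1.1 - p.1.1) + (p0.2.2 - p.2.2) (p0.1.2 - p.1.2)
            + t * (f v0 - f p.1.2) := by
        simp only [q, v0, ContinuousLinearMap.sub_apply, ContinuousLinearMap.add_apply,
          ContinuousLinearMap.smul_apply, map_sub, smul_eq_mul]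
        ring
      rw [hq, hfp]
      simpa using hbase
    have hmono : IsMono2 (insert q F) := by
      rintro p hp p' hp'
      rcases hp with hp | hp
      · rcases hp' with hp' | hp'
        · subst hp; subst hp'; simp
        · subst hp; exact hq2 p' hp'
      · rcases hp' with hp' | hp'
        · subst hp'
          have := hq2 p hp
          have hsym : (q.2.1 - p.2.1) (q.1.1 - p.1.1) + (q.2.2 - p.2.2) (q.1.2 - p.1.2)
              = (p.2.1 - q.2.1) (p.1.1 - q.1.1) + (p.2.2 - q.2.2) (p.1.2 - q.1.2) := by
            simp only [ContinuousLinearMap.sub_apply, map_sub]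
            ring
          linarith [this, hsym.le]
        · exact hF.1 p hp p' hp'
    have heq := hF.2 _ hmono (Set.subset_insert q F)
    rw [← heq]
    exact Set.mem_insert q F
  -- derive a contradiction: fitz2 is unbounded
  have hbound : ∀ t : ℝ, ((pair2 ((x, y), (xs, ys)) ((p0.1.1, v0), (p0.2.1, p0.2.2 + t • f))
      - coup2 ((p0.1.1, v0), (p0.2.1, p0.2.2 + t • f)) : ℝ) : EReal)
      ≤ fitz2 F ((x, y), (xs, ys)) := by
    intro t
    exact le_iSup (fun w : F => ((pair2 ((x, y), (xs, ys)) (w : (X × Y) × ((X →L[ℝ] ℝ) × (Y →L[ℝ] ℝ)))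
      - coup2 (w : (X × Y) × ((X →L[ℝ] ℝ) × (Y →L[ℝ] ℝ))) : ℝ) : EReal)) ⟨_, hkey t⟩
  set C : ℝ := p0.2.1 x + p0.2.2 y + xs p0.1.1 + ys v0 - p0.2.1 p0.1.1 - p0.2.2 v0
  have hval : ∀ t : ℝ, (pair2 ((x, y), (xs, ys)) ((p0.1.1, v0), (p0.2.1, p0.2.2 + t • f))
      - coup2 ((p0.1.1, v0), (p0.2.1, p0.2.2 + t • f)) : ℝ) = C + t * (f y - f v0) := by
    intro t
    simp only [pair2, coup2, ContinuousLinearMap.add_apply, ContinuousLinearMap.smul_apply,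
      smul_eq_mul, C]
    ring
  -- fitz2 ≠ ⊤, so bounded above by some real
  obtain ⟨r, hr⟩ : ∃ r : ℝ, fitz2 F ((x, y), (xs, ys)) ≤ (r : EReal) := by
    cases h : fitz2 F ((x, y), (xs, ys)) with
    | bot => exact ⟨0, bot_le⟩
    | coe r => exact ⟨r, le_refl _⟩
    | top => exact absurd h hfin
  set t0 : ℝ := (r - C + 1) / (f y - f v0)
  have h1 := (hbound t0).trans hr
  rw [hval t0] at h1
  rw [EReal.coe_le_coe_iff] at h1
  have : C + t0 * (f y - f v0) = r + 1 := by
    rw [show t0 = (r - C + 1) / (f y - f v0) from rfl, div_mul_cancel₀ _ hα.ne']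
    ring
  linarith [this ▸ h1]
end
end

section
/- Let M ⊆ X × X* be maximal monotone and of type NI, i.e., inf_{(u,u*) ∈ M} ⟨u* − x*, ĵu − x**⟩ ≤ 0 for every (x*, x**) ∈ X* × X** (equivalently, c_M*(x*,x**) ≥ ⟨x*,x**⟩ for all (x*,x**), where c_M*(x*,x**) := sup{⟨u,x*⟩ + ⟨u*,x**⟩ − ⟨u,u*⟩ : (u,u*) ∈ M}). Then M is strongly representable; indeed, the Fitzpatrick function φ_M is a strong representative of M. -/
open NormedSpace

noncomputable section

/-- membership in `G_s(Z)`: proper, convex, `f ≥ c`, `f* ≥ c`, norm-lsc. -/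
def memGs (X : Type*) [NormedAddCommGroup X] [NormedSpace ℝ X]
    (f : X × StrongDual ℝ X → EReal) : Prop :=
  (∀ z, f z ≠ ⊥) ∧ (∃ z, f z ≠ ⊤) ∧
    Convex ℝ {p : (X × StrongDual ℝ X) × ℝ | f p.1 ≤ (p.2 : EReal)} ∧
    (∀ z, ((coup X z : ℝ) : EReal) ≤ f z) ∧
    (∀ p, ((coupS X p : ℝ) : EReal) ≤ conjF X f p) ∧
    LowerSemicontinuous f

/-- `M ⊆ Z` is monotone. -/
def IsMono (X : Type*) [NormedAddCommGroup X] [NormedSpace ℝ X]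
    (M : Set (X × StrongDual ℝ X)) : Prop :=
  ∀ z ∈ M, ∀ w ∈ M, 0 ≤ (z.2 - w.2) (z.1 - w.1)

/-- `M ⊆ Z` is maximal monotone. -/
def IsMaxMono (X : Type*) [NormedAddCommGroup X] [NormedSpace ℝ X]
    (M : Set (X × StrongDual ℝ X)) : Prop :=
  IsMono X M ∧ ∀ N, IsMono X N → M ⊆ N → N = M

/-- The Fitzpatrick function of `M ⊆ Z`. -/
def fitz (X : Type*) [NormedAddCommGroup X] [NormedSpace ℝ X]
    (M : Set (X × StrongDual ℝ X)) (z : X × StrongDual ℝ X) : EReal :=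
  ⨆ w : M, (((w : X × StrongDual ℝ X).2 z.1 + z.2 (w : X × StrongDual ℝ X).1
      - (w : X × StrongDual ℝ X).2 (w : X × StrongDual ℝ X).1 : ℝ) : EReal)

section Aux

variable {X : Type*} [NormedAddCommGroup X] [NormedSpace ℝ X]

/-- A single term of the Fitzpatrick sup is `≤ fitz`. -/
lemma term_le_fitz (M : Set (X × StrongDual ℝ X)) (z : X × StrongDual ℝ X) (w : X × StrongDual ℝ X)
    (hw : w ∈ M) :
    ((w.2 z.1 + z.2 w.1 - w.2 w.1 : ℝ) : EReal) ≤ fitz X M z :=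
  le_iSup (fun w : M => (((w : X × StrongDual ℝ X).2 z.1 + z.2 (w : X × StrongDual ℝ X).1
      - (w : X × StrongDual ℝ X).2 (w : X × StrongDual ℝ X).1 : ℝ) : EReal)) ⟨w, hw⟩

/-- On `M`, fitz equals the coupling. -/
lemma fitz_eq_coup_of_mem {M : Set (X × StrongDual ℝ X)} (hmono : IsMono X M)
    {z : X × StrongDual ℝ X} (hz : z ∈ M) : fitz X M z = ((coup X z : ℝ) : EReal) := by
  apply le_antisymm
  · apply iSup_le
    rintro ⟨w, hw⟩
    rw [EReal.coe_le_coe_iff]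
    have h := hmono z hz w hw
    simp only [ContinuousLinearMap.sub_apply, map_sub] at h
    simp only [coup]
    linarith
  · have := term_le_fitz M z z hz
    simpa [coup] using this
end Aux

/-- every maximal monotone operator `M` of type NI
(`inf_{(u,u*) ∈ M} ⟨u* - x*, ĵu - x**⟩ ≤ 0` for all `(x*, x**) ∈ X* × X**`) is strongly
representable, and the Fitzpatrick function `φ_M` is a strong representative of `M`. -/
theorem stmt18 {X : Type*} [NormedAddCommGroup X] [NormedSpace ℝ X] [CompleteSpace X]
    (M : Set (X × StrongDual ℝ X)) (hM : IsMaxMono X M)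
    (hNI : ∀ (xs : StrongDual ℝ X) (xss : StrongDual ℝ (StrongDual ℝ X)), ∀ δ : ℝ, 0 < δ →
      ∃ w ∈ M, (inclusionInDoubleDual ℝ X w.1 - xss) (w.2 - xs) < δ) :
    (∃ f, memGs X f ∧ M = Mset X f) ∧
    memGs X (fitz X M) ∧ M = Mset X (fitz X M) := by
  obtain ⟨hmono, hmax⟩ := hM
  -- M is nonempty
  obtain ⟨w₀, hw₀, -⟩ := hNI 0 0 1 one_pos
  -- key: if all w ∈ M are monotonically related to z, then z ∈ M
  have hkey : ∀ z : X × StrongDual ℝ X, (∀ w ∈ M, 0 ≤ (z.2 - w.2) (z.1 - w.1)) → z ∈ M := by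
    intro z hz
    have hN : IsMono X (insert z M) := by
      rintro a (rfl | ha) b (rfl | hb)
      · simp
      · exact hz b hb
      · have := hz a ha
        simp only [ContinuousLinearMap.sub_apply, map_sub] at this ⊢
        linarith
      · exact hmono a ha b hb
    have := hmax _ hN (Set.subset_insert z M)
    rw [← this]; exact Set.mem_insert z M
  -- M = Mset (fitz M)
  have hMset : M = Mset X (fitz X M) := by
    ext z
    constructor
    · intro hz
      exact fitz_eq_coup_of_mem hmono hz
    · intro hz
      apply hkey
      intro w hw
      have h1 : ((w.2 z.1 + z.2 w.1 - w.2 w.1 : ℝ) : EReal) ≤ ((coup X z : ℝ) : EReal) :=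
        hz ▸ term_le_fitz M z w hw
      rw [EReal.coe_le_coe_iff] at h1
      simp only [ContinuousLinearMap.sub_apply, map_sub]
      simp only [coup] at h1
      linarith
  -- fitz ≥ coup everywhere
  have hge : ∀ z, ((coup X z : ℝ) : EReal) ≤ fitz X M z := by
    intro z
    by_contra h
    push_neg at h
    have hz : z ∈ M := by
      apply hkey
      intro w hw
      have h1 : ((w.2 z.1 + z.2 w.1 - w.2 w.1 : ℝ) : EReal) < ((coup X z : ℝ) : EReal) :=
        lt_of_le_of_lt (term_le_fitz M z w hw) h
      rw [EReal.coe_lt_coe_iff] at h1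
      simp only [ContinuousLinearMap.sub_apply, map_sub]
      simp only [coup] at h1
      linarith
    rw [fitz_eq_coup_of_mem hmono hz] at h
    exact lt_irrefl _ h
  -- not ⊥
  have hnbot : ∀ z, fitz X M z ≠ ⊥ := fun z =>
    ne_bot_of_le_ne_bot (EReal.coe_ne_bot _) (hge z)
  -- not ⊤ somewhere
  have hntop : ∃ z, fitz X M z ≠ ⊤ := by
    refine ⟨w₀, ?_⟩
    rw [fitz_eq_coup_of_mem hmono hw₀]
    exact EReal.coe_ne_top _
  -- convexity
  have hconv : Convex ℝ {p : (X × StrongDual ℝ X) × ℝ | fitz X M p.1 ≤ (p.2 : EReal)} := by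
    rintro p hp q hq a b ha hb hab
    simp only [Set.mem_setOf_eq] at hp hq ⊢
    apply iSup_le
    rintro ⟨w, hw⟩
    have h1 : w.2 p.1.1 + p.1.2 w.1 - w.2 w.1 ≤ p.2 :=
      EReal.coe_le_coe_iff.1 (le_trans (term_le_fitz M p.1 w hw) hp)
    have h2 : w.2 q.1.1 + q.1.2 w.1 - w.2 w.1 ≤ q.2 :=
      EReal.coe_le_coe_iff.1 (le_trans (term_le_fitz M q.1 w hw) hq)
    rw [EReal.coe_le_coe_iff]
    simp only [Prod.smul_fst, Prod.smul_snd, Prod.fst_add, Prod.snd_add, Prod.smul_fst,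
      Prod.smul_snd, smul_eq_mul, map_add, map_smul, ContinuousLinearMap.add_apply,
      ContinuousLinearMap.coe_smul', Pi.smul_apply, smul_eq_mul]
    have e1 := mul_le_mul_of_nonneg_left h1 ha
    have e2 := mul_le_mul_of_nonneg_left h2 hb
    have e3 : a * (w.2 w.1) + b * (w.2 w.1) = w.2 w.1 := by rw [← add_mul, hab, one_mul]
    linarith [e1, e2, e3]
  -- lsc
  have hlsc : LowerSemicontinuous (fitz X M) := by
    apply lowerSemicontinuous_iSup
    rintro ⟨w, hw⟩
    apply Continuous.lowerSemicontinuous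
    apply continuous_coe_real_ereal.comp
    have c1 : Continuous fun z : X × StrongDual ℝ X => w.2 z.1 := w.2.continuous.comp continuous_fst
    have c2 : Continuous fun z : X × StrongDual ℝ X => z.2 w.1 :=
      ((ContinuousLinearMap.apply ℝ ℝ w.1).continuous).comp continuous_snd
    exact (c1.add c2).sub continuous_const
  -- conjugate ≥ coupling (this is where NI enters)
  have hconj : ∀ p, ((coupS X p : ℝ) : EReal) ≤ conjF X (fitz X M) p := by
    rintro ⟨xs, xss⟩
    have hA : ∀ δ : ℝ, 0 < δ → ((coupS X (xs, xss) - δ : ℝ) : EReal) ≤ conjF X (fitz X M) (xs, xss) := by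
      intro δ hδ
      obtain ⟨w, hw, hwδ⟩ := hNI xs xss δ hδ
      have hterm : (((xs, xss).1 w.1 + (xs, xss).2 w.2 : ℝ) : EReal) - fitz X M w
          ≤ conjF X (fitz X M) (xs, xss) :=
        le_iSup (fun z : X × StrongDual ℝ X => (((xs, xss).1 z.1 + (xs, xss).2 z.2 : ℝ) : EReal) - fitz X M z) w
      rw [fitz_eq_coup_of_mem hmono hw] at hterm
      rw [← EReal.coe_sub] at hterm
      refine le_trans ?_ hterm
      rw [EReal.coe_le_coe_iff]
      simp only [ContinuousLinearMap.sub_apply, map_sub, NormedSpace.dual_def] at hwδ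
      simp only [coup, coupS]
      linarith
    rcases eq_or_ne (conjF X (fitz X M) (xs, xss)) ⊤ with h | h
    · rw [h]; exact le_top
    · have hb : conjF X (fitz X M) (xs, xss) ≠ ⊥ := by
        intro hbot
        have := hA 1 one_pos
        rw [hbot] at this
        exact (EReal.coe_ne_bot _) (le_bot_iff.1 this)
      lift conjF X (fitz X M) (xs, xss) to ℝ using ⟨h, hb⟩ with a ha
      rw [EReal.coe_le_coe_iff]
      refine le_of_forall_pos_le_add ?_
      intro ε hε
      have := hA ε hε
      rw [EReal.coe_le_coe_iff] at this
      linarith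
  have hmemGs : memGs X (fitz X M) := ⟨hnbot, hntop, hconv, hge, hconj, hlsc⟩
  exact ⟨⟨fitz X M, hmemGs, hMset⟩, hmemGs, hMset⟩
end
end
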